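/- arXiv:1809.04588 — 3 statements merged into one kernel-verified Lean document; each statement's English description precedes it below -/
import Mathlib

section
/- Let G = G₁ * G₂ be a free product of nontrivial groups where G₂ has at least three elements. Fix a nontrivial a ∈ G₁ and two distinct nontrivial elements b₁, b₂ ∈ G₂. For each r ≥ 1 and each tuple (m₁,…,m_r) ∈ {1,2}^r define g(m₁,…,m_r) = a·b_{m₁}·a·b_{m₂}⋯a·b_{m_r}. Then g(m₁,…,m_r) and g(m'₁,…,m'_r) are conjugate in G if and only if the tuples (m₁,…,m_r) and (m'₁,…,m'_r) agree up to a cyclic permutation. -/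
/-!
STATEMENT 3: the words `g(m₁,…,m_r) = a b_{m₁} a b_{m₂} ⋯ a b_{m_r}` in a free product
are conjugate iff the tuples agree up to a cyclic permutation.
-/

open Monoid

namespace ConjAux

open List

variable {M : Bool → Type*} [∀ i, Group (M i)]

/-- product of a list of letters in the free product -/
def puw (u : List (Σ i, M i)) : CoprodI M := (u.map fun l => CoprodI.of l.2).prod

@[simp] lemma puw_nil : (puw ([] : List (Σ i, M i))) = 1 := rfl

@[simp] lemma puw_cons (c : Σ i, M i) (u : List (Σ i, M i)) :
    puw (c :: u) = CoprodI.of c.2 * puw u := by simp [puw]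

@[simp] lemma puw_append (u v : List (Σ i, M i)) : puw (u ++ v) = puw u * puw v := by
  simp [puw]

@[simp] lemma puw_singleton (c : Σ i, M i) : puw [c] = CoprodI.of c.2 := by simp

/-- formal inverse of a list of letters -/
def invL (u : List (Σ i, M i)) : List (Σ i, M i) := (u.map fun l => ⟨l.1, l.2⁻¹⟩).reverse

@[simp] lemma puw_invL (u : List (Σ i, M i)) : puw (invL u) = (puw u)⁻¹ := by
  induction u with
  | nil => simp [invL]
  | cons c u ih =>
    have : invL (c :: u) = invL u ++ [⟨c.1, c.2⁻¹⟩] := by simp [invL]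
    rw [this, puw_append, ih, puw_singleton, puw_cons, mul_inv_rev]
    simp [map_inv]

@[simp] lemma invL_length (u : List (Σ i, M i)) : (invL u).length = u.length := by simp [invL]

def Red (u : List (Σ i, M i)) : Prop :=
  (∀ l ∈ u, l.2 ≠ 1) ∧ u.Chain' fun l l' => l.1 ≠ l'.1

open scoped Classical in
lemma equiv_toList_puw {u : List (Σ i, M i)} (h : Red u) :
    (CoprodI.Word.equiv (puw u)).toList = u := by
  have : puw u = CoprodI.Word.prod (⟨u, h.1, h.2⟩ : CoprodI.Word M) := rfl
  rw [this]
  have h2 : CoprodI.Word.prod (⟨u, h.1, h.2⟩ : CoprodI.Word M) =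
      CoprodI.Word.equiv.symm (⟨u, h.1, h.2⟩ : CoprodI.Word M) := rfl
  rw [h2, Equiv.apply_symm_apply]

lemma puw_inj {u v : List (Σ i, M i)} (hu : Red u) (hv : Red v) (h : puw u = puw v) :
    u = v := by
  classical
  rw [← equiv_toList_puw hu, ← equiv_toList_puw hv, h]

open scoped Classical in
/-- length of the normal form -/
noncomputable def redLen (x : CoprodI M) : ℕ := (CoprodI.Word.equiv x).toList.length

lemma redLen_puw {u : List (Σ i, M i)} (h : Red u) : redLen (puw u) = u.length := by
  rw [redLen, equiv_toList_puw h]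

open scoped Classical in
lemma puw_equiv_toList (x : CoprodI M) : puw ((CoprodI.Word.equiv x).toList) = x := by
  have : puw ((CoprodI.Word.equiv x).toList) = CoprodI.Word.prod (CoprodI.Word.equiv x) := rfl
  rw [this]
  have h2 : CoprodI.Word.prod (CoprodI.Word.equiv x) =
      CoprodI.Word.equiv.symm (CoprodI.Word.equiv x) := rfl
  rw [h2, Equiv.symm_apply_apply]


def Rne : (Σ i, M i) → (Σ i, M i) → Prop := fun l l' => l.1 ≠ l'.1

def CyclRed (u : List (Σ i, M i)) : Prop :=
  u ≠ [] ∧ (∀ l ∈ u, l.2 ≠ 1) ∧ (u ++ u).Chain' (Rne (M := M))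

lemma chain_three {u : List (Σ i, M i)} (h : (u ++ u).Chain' (Rne (M := M))) :
    (u ++ u ++ u).Chain' (Rne (M := M)) := by
  rcases eq_or_ne u [] with rfl | hne
  · simp [List.Chain']
  rcases List.isChain_append.mp h with ⟨h1, h2, h3⟩
  rw [List.append_assoc]
  refine List.isChain_append.mpr ⟨h1, h, ?_⟩
  intro x hx y hy
  apply h3 x hx y
  rcases u with _ | ⟨c, t⟩
  · exact absurd rfl hne
  · simpa using hy

lemma chain_rotate {u : List (Σ i, M i)} (h : (u ++ u).Chain' (Rne (M := M))) (k : ℕ) :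
    (u.rotate k ++ u.rotate k).Chain' (Rne (M := M)) := by
  rcases eq_or_ne u [] with rfl | hne
  · simp [List.Chain']
  have hj : k % u.length < u.length := Nat.mod_lt _ (List.length_pos_iff.mpr hne)
  rw [← List.rotate_mod, List.rotate_eq_drop_append_take hj.le]
  apply (chain_three h).infix
  refine ⟨u.take (k % u.length), u.drop (k % u.length), ?_⟩
  have key : ∀ x : List (Σ i, M i),
      u.take (k % u.length) ++ (u.drop (k % u.length) ++ x) = u ++ x := by
    intro x; rw [← List.append_assoc, List.take_append_drop]
  simp only [List.append_assoc, key, List.take_append_drop]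

lemma CyclRed.rotate {u : List (Σ i, M i)} (h : CyclRed u) (k : ℕ) : CyclRed (u.rotate k) :=
  ⟨fun hc => h.1 (List.rotate_eq_nil_iff.mp hc),
   fun l hl => h.2.1 l (List.mem_rotate.mp hl), chain_rotate h.2.2 k⟩

lemma CyclRed.red {u : List (Σ i, M i)} (h : CyclRed u) : Red u :=
  ⟨h.2.1, (List.isChain_append.mp h.2.2).1⟩

lemma CyclRed.two_le {u : List (Σ i, M i)} (h : CyclRed u) : 2 ≤ u.length := by
  rcases u with _ | ⟨c, _ | ⟨d, t⟩⟩
  · exact absurd rfl h.1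
  · have := h.2.2
    simp [Rne, List.Chain'] at this
  · simp only [List.length_cons]; omega


set_option linter.unusedSectionVars false

lemma chain'_invL {L : List (Σ i, M i)} (h : L.Chain' (Rne (M := M))) :
    (invL L).Chain' (Rne (M := M)) := by
  rw [invL, List.Chain', List.isChain_reverse, List.isChain_map]
  exact h.imp fun a b hab => Ne.symm hab

lemma exists_red (x : CoprodI M) :
    ∃ L : List (Σ i, M i), Red L ∧ x = puw L ∧ L.length = redLen x := by
  classical
  exact ⟨(CoprodI.Word.equiv x).toList,
    ⟨(CoprodI.Word.equiv x).ne_one, (CoprodI.Word.equiv x).chain_ne⟩,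
    (puw_equiv_toList x).symm, rfl⟩

lemma key : ∀ (n : ℕ) (x : CoprodI M), redLen x = n →
    ∀ u : List (Σ i, M i), CyclRed u →
    (∃ k, x * puw u * x⁻¹ = puw (u.rotate k)) ∨ u.length < redLen (x * puw u * x⁻¹) := by
  intro n
  induction n using Nat.strong_induction_on with
  | _ n ih =>
  intro x hxn u hu
  obtain ⟨L, hL, hxL, hLlen⟩ := exists_red x
  rcases List.eq_nil_or_concat L with rfl | ⟨L₀, c, rfl⟩
  · left
    refine ⟨0, ?_⟩
    rw [List.rotate_zero]
    simp [hxL]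
  · rw [List.concat_eq_append] at hL hxL hLlen
    -- facts about L
    have hc1 : c.2 ≠ 1 := hL.1 c (by simp)
    have hL₀ : Red L₀ := ⟨fun l hl => hL.1 l (by simp [hl]),
      hL.2.prefix (List.prefix_append _ _)⟩
    have hjunc : ∀ l ∈ L₀.getLast?, l.1 ≠ c.1 := by
      intro l hl
      have h3 := (List.isChain_append.mp hL.2).2.2
      exact h3 l hl c (by simp)
    set y : CoprodI M := puw L₀ with hy
    have hylen : redLen y < n := by
      rw [← hxn, ← hLlen, redLen_puw hL₀]
      simp
    -- decompositions of u
    obtain ⟨d, t, hud⟩ : ∃ d t, u = d :: t := by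
      rcases u with _ | ⟨d, t⟩
      · exact absurd rfl hu.1
      · exact ⟨d, t, rfl⟩
    obtain ⟨t', e, hue⟩ : ∃ t' e, u = t' ++ [e] := by
      rcases List.eq_nil_or_concat u with h | ⟨t', e, h⟩
      · exact absurd h hu.1
      · exact ⟨t', e, by simpa using h⟩
    have htwo : 2 ≤ u.length := hu.two_le
    have ht : t ≠ [] := by
      rintro rfl
      rw [hud] at htwo; simp at htwo
    have ht' : t' ≠ [] := by
      rintro rfl
      rw [hue] at htwo; simp at htwo
    have hchu : List.Chain' (Rne (M := M)) u := hu.red.2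
    have hheadu : u.head? = some d := by rw [hud]; rfl
    have hlastu : u.getLast? = some e := by rw [hue, List.getLast?_concat]
    have hRed : e.1 ≠ d.1 := by
      have h3 := (List.isChain_append.mp hu.2.2).2.2
      exact h3 e (by rw [hlastu]; rfl) d (by rw [hheadu]; rfl)
    have hxy : x = y * CoprodI.of c.2 := by
      rw [hxL, puw_append, puw_singleton]
    obtain ⟨ci, g⟩ := c
    simp only at hjunc hxy hc1 ⊢
    by_cases hcd : ci = d.1
    · -- c in the same factor as the head of u
      subst hcd
      by_cases h1 : g * d.2 = 1
      · -- cancellation : conjugation rotates u by one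
        have hgd : (CoprodI.of (M := M) g)⁻¹ = CoprodI.of d.2 := by
          rw [← map_inv, inv_eq_of_mul_eq_one_right h1]
        have habs : CoprodI.of (M := M) g * CoprodI.of d.2 = 1 := by
          rw [← map_mul, h1, map_one]
        have e1 : x * puw u * x⁻¹ = y * puw (u.rotate 1) * y⁻¹ := by
          have hrot : u.rotate 1 = t ++ [d] := by
            rw [hud, List.rotate_cons_succ, List.rotate_zero]
          rw [hrot, hxy, hud]
          simp only [puw_cons, puw_append, puw_singleton, puw_nil, mul_one, one_mul, mul_inv_rev, hgd]
          simp only [mul_assoc]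
          rw [← mul_assoc (CoprodI.of g) (CoprodI.of d.2), habs, one_mul]
        rcases ih (redLen y) hylen y rfl (u.rotate 1) (hu.rotate 1) with ⟨k, hk⟩ | hlong
        · left
          exact ⟨1 + k, by rw [e1, hk, List.rotate_rotate]⟩
        · right
          rw [e1]
          simpa using hlong
      · -- no cancellation : the conjugate is long
        set F : List (Σ i, M i) :=
          L₀ ++ (⟨d.1, g * d.2⟩ :: (t ++ [⟨d.1, g⁻¹⟩])) ++ invL L₀ with hF
        have hprod : puw F = x * puw u * x⁻¹ := by
          rw [hF, puw_append, puw_append, puw_cons, puw_append, puw_singleton, puw_invL,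
            hxy, hud, puw_cons]
          simp only [map_mul, map_inv]
          rw [← hy]
          group
        have htle : t.getLast? = some e := by
          rcases t with _ | ⟨t0, ts⟩
          · exact absurd rfl ht
          · rw [hud] at hlastu
            rwa [List.getLast?_cons_cons] at hlastu
        have hredF : Red F := by
          constructor
          · intro l hl
            simp only [hF, List.mem_append, List.mem_cons, List.mem_singleton, invL,
              List.mem_reverse, List.mem_map, List.not_mem_nil, or_false] at hl
            rcases hl with ((hl | rfl | hl | rfl) | ⟨a, ha, rfl⟩)
            · exact hL₀.1 l hl
            · exact h1
            · exact hu.2.1 l (by rw [hud]; exact List.mem_cons_of_mem _ hl)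
            · exact inv_ne_one.mpr hc1
            · exact inv_ne_one.mpr (hL₀.1 a ha)
          · rw [hF]
            refine List.isChain_append.mpr ⟨List.isChain_append.mpr ⟨hL₀.2, ?_, ?_⟩,
              chain'_invL hL₀.2, ?_⟩
            · -- chain of the middle part
              refine List.isChain_cons.mpr ⟨?_, List.isChain_append.mpr
                ⟨(List.isChain_cons.mp (hud ▸ hchu)).2, List.isChain_singleton _, ?_⟩⟩
              · intro z hz
                rw [List.head?_append_of_ne_nil _ ht] at hz
                exact (List.isChain_cons.mp (hud ▸ hchu)).1 z hz
              · intro z hz w hw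
                simp only [List.head?_cons, Option.mem_def, Option.some.injEq] at hw
                subst hw
                rw [htle] at hz
                simp only [Option.mem_def, Option.some.injEq] at hz
                subst hz
                exact hRed
            · -- junction L₀ / middle
              intro z hz w hw
              simp only [List.head?_cons, Option.mem_def, Option.some.injEq] at hw
              subst hw
              exact hjunc z hz
            · -- junction / invL L₀
              intro z hz w hw
              have hzlast : z = ⟨d.1, g⁻¹⟩ := by
                rw [List.getLast?_append_of_ne_nil _ (by simp), ← List.cons_append,
                  List.getLast?_concat] at hz
                have : (⟨d.1, g⁻¹⟩ : Σ i, M i) = z := by simpa using hz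
                exact this.symm
              rw [invL, List.head?_reverse, List.getLast?_map, Option.mem_def,
                Option.map_eq_some_iff] at hw
              obtain ⟨a, ha, rfl⟩ := hw
              have := hjunc a ha
              rw [hzlast]
              simpa using Ne.symm this
        right
        rw [← hprod, redLen_puw hredF]
        have hFlen : F.length = L₀.length + (t.length + 2) + L₀.length := by
          simp [hF]
          omega
        rw [hFlen, hud]
        simp
        omega
    · -- c in the same factor as the last letter of u
      have hce : ci = e.1 := (by decide : ∀ x y z : Bool, x ≠ y → z ≠ y → x = z)
        ci d.1 e.1 hcd hRed
      subst hce
      have hchu' : List.Chain' (Rne (M := M)) (t' ++ [e]) := hue ▸ hchu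
      have hchaint' : List.Chain' (Rne (M := M)) t' := hchu'.prefix (List.prefix_append _ _)
      have hjt' : ∀ z ∈ t'.getLast?, z.1 ≠ e.1 := by
        intro z hz
        exact (List.isChain_append.mp hchu').2.2 z hz e (by simp)
      have hheadt' : t'.head? = some d := by
        rw [hue, List.head?_append_of_ne_nil _ ht'] at hheadu
        exact hheadu
      have hlent' : u.length - 1 = t'.length := by rw [hue]; simp
      by_cases h1 : e.2 * g⁻¹ = 1
      · -- cancellation : conjugation rotates u backwards by one
        have hge : g = e.2 := (mul_inv_eq_one.mp h1).symm
        have hrot : u.rotate (u.length - 1) = e :: t' := by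
          rw [List.rotate_eq_drop_append_take (Nat.sub_le _ _), hue,
            show (t' ++ [e]).length - 1 = t'.length by simp,
            List.drop_left, List.take_left]
          rfl
        have e1 : x * puw u * x⁻¹ = y * puw (u.rotate (u.length - 1)) * y⁻¹ := by
          have habs : CoprodI.of (M := M) e.2 * CoprodI.of g⁻¹ = 1 := by
            rw [← map_mul, h1, map_one]
          rw [hrot, hxy, hue]
          simp only [puw_cons, puw_append, puw_singleton, puw_nil, mul_one, one_mul,
            mul_inv_rev, ← map_inv]
          simp only [mul_assoc]
          rw [← mul_assoc (CoprodI.of e.2) (CoprodI.of g⁻¹), habs, one_mul, hge]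
        rcases ih (redLen y) hylen y rfl (u.rotate (u.length - 1))
          (hu.rotate (u.length - 1)) with ⟨k, hk⟩ | hlong
        · left
          exact ⟨(u.length - 1) + k, by rw [e1, hk, List.rotate_rotate]⟩
        · right
          rw [e1]
          simpa using hlong
      · -- no cancellation : the conjugate is long
        set F : List (Σ i, M i) :=
          L₀ ++ (⟨e.1, g⟩ :: (t' ++ [⟨e.1, e.2 * g⁻¹⟩])) ++ invL L₀ with hF
        have hprod : puw F = x * puw u * x⁻¹ := by
          rw [hF, puw_append, puw_append, puw_cons, puw_append, puw_singleton, puw_invL,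
            hxy, hue, puw_append, puw_singleton]
          simp only [map_mul, map_inv]
          rw [← hy]
          group
        have hredF : Red F := by
          constructor
          · intro l hl
            simp only [hF, List.mem_append, List.mem_cons, List.mem_singleton, invL,
              List.mem_reverse, List.mem_map, List.not_mem_nil, or_false] at hl
            rcases hl with ((hl | rfl | hl | rfl) | ⟨a, ha, rfl⟩)
            · exact hL₀.1 l hl
            · exact hc1
            · exact hu.2.1 l (by rw [hue]; exact List.mem_append_left _ hl)
            · exact h1
            · exact inv_ne_one.mpr (hL₀.1 a ha)
          · rw [hF]
            refine List.isChain_append.mpr ⟨List.isChain_append.mpr ⟨hL₀.2, ?_, ?_⟩,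
              chain'_invL hL₀.2, ?_⟩
            · -- chain of the middle part
              refine List.isChain_cons.mpr ⟨?_, List.isChain_append.mpr
                ⟨hchaint', List.isChain_singleton _, ?_⟩⟩
              · intro z hz
                rw [List.head?_append_of_ne_nil _ ht', hheadt'] at hz
                have hzd : d = z := by simpa using hz
                subst hzd
                first
                | exact fun hcon => hRed (by simpa using hcon)
                | exact fun hcon => hRed (by simpa using hcon.symm)
              · intro z hz w hw
                simp only [List.head?_cons, Option.mem_def, Option.some.injEq] at hw
                subst hw
                exact hjt' z hz
            · -- junction L₀ / middle
              intro z hz w hw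
              simp only [List.head?_cons, Option.mem_def, Option.some.injEq] at hw
              subst hw
              exact hjunc z hz
            · -- junction / invL L₀
              intro z hz w hw
              have hzlast : z = ⟨e.1, e.2 * g⁻¹⟩ := by
                rw [List.getLast?_append_of_ne_nil _ (by simp), ← List.cons_append,
                  List.getLast?_concat] at hz
                have : (⟨e.1, e.2 * g⁻¹⟩ : Σ i, M i) = z := by simpa using hz
                exact this.symm
              rw [invL, List.head?_reverse, List.getLast?_map, Option.mem_def,
                Option.map_eq_some_iff] at hw
              obtain ⟨a, ha, rfl⟩ := hw
              have := hjunc a ha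
              rw [hzlast]
              simpa using Ne.symm this
        right
        rw [← hprod, redLen_puw hredF]
        have hFlen : F.length = L₀.length + (t'.length + 2) + L₀.length := by
          simp [hF]
          omega
        rw [hFlen, hue]
        simp
        omega


section U

variable (a : M false) (b : Fin 2 → M true)

/-- the alternating word `a b_{s₁} a b_{s₂} ⋯` as a list of letters -/
def U (s : List (Fin 2)) : List (Σ i, M i) :=
  s.flatMap fun j => [⟨false, a⟩, ⟨true, b j⟩]

@[simp] lemma U_nil : U a b [] = [] := rfl

@[simp] lemma U_cons (j : Fin 2) (s : List (Fin 2)) :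
    U a b (j :: s) = ⟨false, a⟩ :: ⟨true, b j⟩ :: U a b s := rfl

@[simp] lemma U_append (s t : List (Fin 2)) : U a b (s ++ t) = U a b s ++ U a b t := by
  simp [U]

@[simp] lemma U_length (s : List (Fin 2)) : (U a b s).length = 2 * s.length := by
  induction s with
  | nil => rfl
  | cons j s ih => simp [ih]; omega

lemma puw_U (s : List (Fin 2)) :
    puw (U a b s) = (s.map fun j => CoprodI.of a * CoprodI.of (b j)).prod := by
  induction s with
  | nil => rfl
  | cons j s ih => simp [ih, mul_assoc]

lemma chainU' (z : M true) : ∀ s : List (Fin 2),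
    List.Chain' (Rne (M := M)) (⟨true, z⟩ :: U a b s)
  | [] => List.isChain_singleton _
  | j :: s => by
    rw [U_cons]
    exact List.isChain_cons_cons.mpr ⟨by simp [Rne], List.isChain_cons_cons.mpr ⟨by simp [Rne],
      chainU' (b j) s⟩⟩

lemma chainU : ∀ s : List (Fin 2), List.Chain' (Rne (M := M)) (U a b s)
  | [] => List.isChain_nil
  | j :: s => by
    rw [U_cons]
    exact List.isChain_cons_cons.mpr ⟨by simp [Rne], chainU' a b (b j) s⟩

lemma U_letters (ha : a ≠ 1) (hb : ∀ j, b j ≠ 1) (s : List (Fin 2)) :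
    ∀ l ∈ U a b s, l.2 ≠ 1 := by
  intro l hl
  simp only [U, List.mem_flatMap, List.mem_cons, List.mem_singleton, List.not_mem_nil,
    or_false] at hl
  obtain ⟨j, _, rfl | rfl⟩ := hl
  · exact ha
  · exact hb j

lemma redU (ha : a ≠ 1) (hb : ∀ j, b j ≠ 1) (s : List (Fin 2)) : Red (U a b s) :=
  ⟨U_letters a b ha hb s, chainU a b s⟩

lemma cyclU (ha : a ≠ 1) (hb : ∀ j, b j ≠ 1) {s : List (Fin 2)} (hs : s ≠ []) :
    CyclRed (U a b s) := by
  refine ⟨?_, U_letters a b ha hb s, ?_⟩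
  · rcases s with _ | ⟨j, s⟩
    · exact absurd rfl hs
    · simp
  · rw [← U_append]
    exact chainU a b _

lemma U_inj (hb : Function.Injective b) : ∀ {s s' : List (Fin 2)},
    U a b s = U a b s' → s = s' := by
  intro s
  induction s with
  | nil =>
    intro s' h
    rcases s' with _ | ⟨j', s'⟩
    · rfl
    · simp at h
  | cons j s ih =>
    intro s' h
    rcases s' with _ | ⟨j', s'⟩
    · simp at h
    · simp only [U_cons, List.cons.injEq, true_and] at h
      obtain ⟨hj, hrest⟩ := h
      have hj' : b j = b j' := by simpa using hj
      rw [hb hj', ih hrest]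

lemma U_rotate_even {s : List (Fin 2)} {j : ℕ} (hj : j ≤ s.length) :
    (U a b s).rotate (2 * j) = U a b (s.rotate j) := by
  have h1 : (U a b (s.take j)).length = 2 * j := by
    simp [List.length_take, Nat.min_eq_left hj]
  have h2 : U a b s = U a b (s.take j) ++ U a b (s.drop j) := by
    rw [← U_append, List.take_append_drop]
  conv_lhs => rw [h2]
  rw [List.rotate_eq_drop_append_take (by rw [← h2]; simp; omega),
    List.drop_left' h1, List.take_left' h1,
    List.rotate_eq_drop_append_take hj, U_append]

lemma U_rotate_odd_head {s : List (Fin 2)} {j : ℕ} (hj : j < s.length) :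
    ∃ z, ((U a b s).rotate (2 * j + 1)).head? = some ⟨true, z⟩ := by
  obtain ⟨j', rest, hdrop⟩ : ∃ j' rest, s.drop j = j' :: rest := by
    rcases hd : s.drop j with _ | ⟨j', rest⟩
    · exfalso
      have := List.length_drop (i := j) (l := s)
      rw [hd] at this
      simp at this
      omega
    · exact ⟨j', rest, rfl⟩
  have h1 : (U a b (s.take j)).length = 2 * j := by
    simp [List.length_take, Nat.min_eq_left hj.le]
  have h2 : U a b s = U a b (s.take j) ++ U a b (s.drop j) := by
    rw [← U_append, List.take_append_drop]
  have hdd : (U a b s).drop (2 * j + 1) = ⟨true, b j'⟩ :: U a b rest := by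
    have h3 : U a b s = (U a b (s.take j) ++ [⟨false, a⟩]) ++ (⟨true, b j'⟩ :: U a b rest) := by
      rw [h2, hdrop, U_cons]
      simp
    rw [h3, List.drop_left' (by simp [h1])]
  refine ⟨b j', ?_⟩
  rw [List.rotate_eq_drop_append_take (by simp; omega), List.head?_append_of_ne_nil _ (by
    rw [hdd]; exact List.cons_ne_nil _ _), hdd]
  rfl

lemma U_conj (ha : a ≠ 1) (hbj : ∀ j, b j ≠ 1) (hb : Function.Injective b)
    {s s' : List (Fin 2)} (hs : s ≠ []) (hlen : s'.length = s.length)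
    {x : CoprodI M} (h : x * puw (U a b s) * x⁻¹ = puw (U a b s')) :
    ∃ j < s.length, s' = s.rotate j := by
  have hs' : s' ≠ [] := by
    intro hc
    rw [hc] at hlen
    exact hs (List.length_eq_zero_iff.mp hlen.symm)
  rcases key (redLen x) x rfl (U a b s) (cyclU a b ha hbj hs) with ⟨k, hk⟩ | hlong
  · have heq : U a b s' = (U a b s).rotate k :=
      puw_inj (redU a b ha hbj s') ((cyclU a b ha hbj hs).rotate k).red (by rw [← h, hk])
    rw [← List.rotate_mod] at heq
    set k' := k % (U a b s).length with hk'
    have hk'lt : k' < 2 * s.length := by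
      rw [hk']
      have := Nat.mod_lt k (show 0 < (U a b s).length by
        simp; rcases s with _ | _; exact absurd rfl hs; simp)
      simpa using this
    rcases Nat.even_or_odd k' with ⟨j, hj⟩ | ⟨j, hj⟩
    · have hjle : j ≤ s.length := by omega
      rw [hj, show j + j = 2 * j by omega, U_rotate_even a b hjle] at heq
      exact ⟨j, by omega, U_inj a b hb heq⟩
    · exfalso
      have hjlt : j < s.length := by omega
      obtain ⟨z, hz⟩ := U_rotate_odd_head a b hjlt
      rw [hj] at heq
      have : (U a b s').head? = some ⟨true, z⟩ := by rw [heq]; exact hz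
      rcases s' with _ | ⟨j0, s'⟩
      · exact hs' rfl
      · rw [U_cons] at this
        simp at this
  · exfalso
    rw [h, redLen_puw (redU a b ha hbj s')] at hlong
    simp only [U_length, hlen] at hlong
    omega

end U


section Bridge

universe u v

variable (G₁ : Type u) (G₂ : Type v) [Group G₁] [Group G₂]

/-- the two-factor family, in a common universe -/
def Mfac : Bool → Type (max u v) := fun i => cond i (ULift.{u} G₂) (ULift.{v} G₁)

instance : ∀ i, Group (Mfac G₁ G₂ i)
  | false => inferInstanceAs (Group (ULift G₁))
  | true => inferInstanceAs (Group (ULift G₂))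

/-- the comparison map from the binary coproduct to the indexed free product -/
def phi : Coprod G₁ G₂ →* CoprodI (Mfac G₁ G₂) :=
  Coprod.lift
    ((CoprodI.of (M := Mfac G₁ G₂) (i := false)).comp
      (MulEquiv.toMonoidHom (MulEquiv.ulift (α := G₁)).symm))
    ((CoprodI.of (M := Mfac G₁ G₂) (i := true)).comp
      (MulEquiv.toMonoidHom (MulEquiv.ulift (α := G₂)).symm))

@[simp] lemma phi_inl (g : G₁) :
    phi G₁ G₂ (Coprod.inl g) = CoprodI.of (M := Mfac G₁ G₂) (i := false) (ULift.up g) :=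
  Coprod.lift_apply_inl _ _ _

@[simp] lemma phi_inr (g : G₂) :
    phi G₁ G₂ (Coprod.inr g) = CoprodI.of (M := Mfac G₁ G₂) (i := true) (ULift.up g) :=
  Coprod.lift_apply_inr _ _ _

end Bridge

end ConjAux

open ConjAux

theorem conj_iff_cyclic_permutation
    {G₁ G₂ : Type*} [Group G₁] [Group G₂]
    (a : G₁) (ha : a ≠ 1) (b : Fin 2 → G₂) (hb : ∀ i, b i ≠ 1) (hbne : b 0 ≠ b 1)
    (r : ℕ) (hr : 1 ≤ r) (m m' : Fin r → Fin 2) :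
    IsConj ((List.ofFn fun i : Fin r => Coprod.inl a * Coprod.inr (b (m i))).prod)
        ((List.ofFn fun i : Fin r => Coprod.inl a * Coprod.inr (b (m' i))).prod) ↔
      ∃ s : Fin r, ∀ i : Fin r, m' i = m (i + s) := by
  set A : Mfac G₁ G₂ false := ULift.up a with hA
  set B : Fin 2 → Mfac G₁ G₂ true := fun j => ULift.up (b j) with hB
  have hA1 : A ≠ 1 := fun hc => ha (congrArg ULift.down hc)
  have hB1 : ∀ j, B j ≠ 1 := fun j hc => hb j (congrArg ULift.down hc)
  have hbinj : Function.Injective b := by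
    intro i j hij
    fin_cases i <;> fin_cases j <;> simp_all
  have hBinj : Function.Injective B := fun i j hij =>
    hbinj (congrArg ULift.down hij)
  have himg : ∀ mm : Fin r → Fin 2,
      phi G₁ G₂ ((List.ofFn fun i : Fin r => Coprod.inl a * Coprod.inr (b (mm i))).prod)
        = puw (U A B (List.ofFn mm)) := by
    intro mm
    rw [map_list_prod, puw_U, List.map_ofFn, List.map_ofFn]
    congr 1
  constructor
  · -- conjugate implies cyclic permutation
    intro hconj
    obtain ⟨x, hx⟩ := isConj_iff.mp hconj
    have hφ : phi G₁ G₂ x * puw (U A B (List.ofFn m)) * (phi G₁ G₂ x)⁻¹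
        = puw (U A B (List.ofFn m')) := by
      rw [← himg, ← himg, ← map_inv, ← map_mul, ← map_mul, hx]
    obtain ⟨j, hj, hrot⟩ := U_conj A B hA1 hB1 hBinj
      (s := List.ofFn m) (s' := List.ofFn m')
      (by intro hc; have := congrArg List.length hc; simp at this; omega)
      (by simp) hφ
    simp only [List.length_ofFn] at hj
    refine ⟨⟨j, hj⟩, fun i => ?_⟩
    have h1 := List.get_of_eq hrot ⟨i.val, by simpa using i.isLt⟩
    rw [List.get_ofFn, List.get_rotate, List.get_ofFn] at h1
    convert h1 using 2 <;> exact (Fin.ext (by simp [Fin.val_add])).symm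
  · -- cyclic permutation implies conjugate
    rintro ⟨s, hs⟩
    have hs' : List.ofFn m' = (List.ofFn m).rotate s.val := by
      refine List.ext_get (by simp) fun k hk1 hk2 => ?_
      rw [List.get_rotate, List.get_ofFn, List.get_ofFn]
      have hklt : k < r := by simpa using hk1
      have h2 := hs ⟨k, hklt⟩
      convert h2 using 2 <;> exact Fin.ext (by simp [Fin.val_add])
    have hrot : (List.ofFn fun i : Fin r => Coprod.inl a * Coprod.inr (b (m' i)))
        = (List.ofFn fun i : Fin r => Coprod.inl a * Coprod.inr (b (m i))).rotate s.val := by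
      have h1 : (List.ofFn fun i : Fin r => Coprod.inl a * Coprod.inr (b (m' i)))
          = (List.ofFn m').map fun j => Coprod.inl a * Coprod.inr (b j) := by
        rw [List.map_ofFn]
        rfl
      rw [h1, hs', List.map_rotate, List.map_ofFn]
      rfl
    rw [hrot]
    set l : List (Coprod G₁ G₂) :=
      List.ofFn (fun i : Fin r => Coprod.inl a * Coprod.inr (b (m i))) with hl
    have hle : s.val ≤ l.length := by rw [hl]; simpa using s.isLt.le
    rw [List.rotate_eq_drop_append_take hle, List.prod_append]
    refine isConj_iff.mpr ⟨((l.take s.val).prod)⁻¹, ?_⟩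
    rw [show l.prod = (l.take s.val).prod * (l.drop s.val).prod from by
      rw [← List.prod_append, List.take_append_drop]]
    group
end

section
/- Let G₁ and G₂ be nontrivial finitely generated groups such that at least one of them has at least three elements. Then the free product G₁ * G₂ has exponential growth: for a finite generating set E, the function k ↦ #{g ∈ G : w_E(g) ≤ k} grows exponentially. -/
/-!
STATEMENT 5: a free product of nontrivial finitely generated groups, one of which has
at least three elements, has exponential growth.
-/

open Monoid

/-- A group (type) has at least three elements. -/
def HasThree (G : Type*) : Prop := ∃ a b c : G, a ≠ b ∧ a ≠ c ∧ b ≠ c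

/-- Word length of `g` with respect to a (symmetrized) generating set `S`. -/
noncomputable def wordLength {G : Type*} [Group G] (S : Set G) (g : G) : ℕ :=
  sInf {n | ∃ l : List G, (∀ x ∈ l, x ∈ S ∨ x⁻¹ ∈ S) ∧ l.length = n ∧ l.prod = g}

namespace FPEG

open CoprodI

variable {ι : Type*} {M : ι → Type*} [∀ k, Monoid (M k)]

/-- Alternating reduced words. -/
def altWord {i j : ι} (hij : i ≠ j) (a b : M i) (c : M j)
    (ha : a ≠ 1) (hb : b ≠ 1) (hc : c ≠ 1) :
    List Bool → {w : Word M // w.fstIdx ≠ some j}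
  | [] => ⟨Word.empty, by simp [Word.fstIdx, Word.empty]⟩
  | s :: l =>
    ⟨Word.cons (cond s a b)
       (Word.cons c (altWord hij a b c ha hb hc l).1 (altWord hij a b c ha hb hc l).2 hc)
       (by simp [Word.fstIdx_cons]; exact Ne.symm hij)
       (by cases s <;> simpa),
     by simp [Word.fstIdx_cons]; exact hij⟩

theorem altWord_toList {i j : ι} (hij : i ≠ j) (a b : M i) (c : M j)
    (ha : a ≠ 1) (hb : b ≠ 1) (hc : c ≠ 1) (l : List Bool) :
    (altWord hij a b c ha hb hc l).1.toList
      = l.flatMap (fun s => [⟨i, cond s a b⟩, (⟨j, c⟩ : Σ k, M k)]) := by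
  induction l with
  | nil => simp [altWord]
  | cons s l ih => simp [altWord, ih]

theorem altWord_prod {i j : ι} (hij : i ≠ j) (a b : M i) (c : M j)
    (ha : a ≠ 1) (hb : b ≠ 1) (hc : c ≠ 1) (l : List Bool) :
    (altWord hij a b c ha hb hc l).1.prod
      = (l.map (fun s => (of (cond s a b) : CoprodI M) * of c)).prod := by
  induction l with
  | nil => simp [altWord]
  | cons s l ih => simp [altWord, Word.prod_cons, ih, mul_assoc]

omit [∀ k, Monoid (M k)] in
theorem flatMap_inj {i j : ι} (a b : M i) (c : M j) (hab : a ≠ b) :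
    ∀ l₁ l₂ : List Bool,
      l₁.flatMap (fun s => [⟨i, cond s a b⟩, (⟨j, c⟩ : Σ k, M k)])
        = l₂.flatMap (fun s => [⟨i, cond s a b⟩, (⟨j, c⟩ : Σ k, M k)]) → l₁ = l₂ := by
  intro l₁
  induction l₁ with
  | nil => intro l₂ h; cases l₂ <;> simp_all
  | cons s₁ t₁ ih =>
    intro l₂ h
    cases l₂ with
    | nil => simp_all
    | cons s₂ t₂ =>
      simp only [List.flatMap_cons, List.cons_append, List.cons.injEq, List.nil_append] at h
      obtain ⟨h1, -, h2⟩ := h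
      have h1' : cond s₁ a b = cond s₂ a b := by simpa using h1
      have hs : s₁ = s₂ := by cases s₁ <;> cases s₂ <;> simp_all
      exact hs ▸ congrArg _ (ih _ h2)

theorem alt_inj {i j : ι} (hij : i ≠ j) (a b : M i) (c : M j)
    (ha : a ≠ 1) (hb : b ≠ 1) (hab : a ≠ b) (hc : c ≠ 1) :
    Function.Injective
      (fun l : List Bool => (l.map (fun s => (of (cond s a b) : CoprodI M) * of c)).prod) := by
  classical
  intro l₁ l₂ h
  have h2 : (altWord hij a b c ha hb hc l₁).1 = (altWord hij a b c ha hb hc l₂).1 := by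
    apply Word.equiv.symm.injective
    show Word.prod _ = Word.prod _
    rw [altWord_prod, altWord_prod]
    exact h
  have h3 := congrArg Word.toList h2
  rw [altWord_toList, altWord_toList] at h3
  exact flatMap_inj a b c hab _ _ h3

theorem hasThree_elim {G : Type*} [Group G] (h : HasThree G) :
    ∃ a b : G, a ≠ 1 ∧ b ≠ 1 ∧ a ≠ b := by
  obtain ⟨a, b, c, hab, hac, hbc⟩ := h
  by_cases ha : a = 1
  · subst ha
    exact ⟨b, c, Ne.symm hab, Ne.symm hac, hbc⟩
  · by_cases hb : b = 1
    · subst hb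
      exact ⟨a, c, ha, Ne.symm hbc, hac⟩
    · exact ⟨a, b, ha, hb, hab⟩

/-- `ULift.up` as a monoid hom. -/
def upHom (G : Type*) [MulOneClass G] : G →* ULift G where
  toFun := ULift.up
  map_one' := rfl
  map_mul' _ _ := rfl

theorem exists_free_pair {G₁ : Type u₁} {G₂ : Type u₂} [Group G₁] [Group G₂]
    [Nontrivial G₁] [Nontrivial G₂] (h3 : HasThree G₁ ∨ HasThree G₂) :
    ∃ x y : Coprod G₁ G₂,
      Function.Injective (fun l : List Bool => (l.map (fun s => cond s x y)).prod) := by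
  letI M : Bool → Type (max u₁ u₂) := fun t => cond t (ULift.{u₂} G₁) (ULift.{u₁} G₂)
  letI instM : ∀ t, Monoid (M t) :=
    fun t => t.rec (inferInstance : Monoid (ULift.{u₁} G₂))
      (inferInstance : Monoid (ULift.{u₂} G₁))
  letI φ : Coprod G₁ G₂ →* CoprodI M :=
    Coprod.lift ((CoprodI.of (M := M) (i := true)).comp (upHom G₁))
      ((CoprodI.of (M := M) (i := false)).comp (upHom G₂))
  rcases h3 with h3 | h3
  · obtain ⟨a, b, ha, hb, hab⟩ := hasThree_elim h3
    obtain ⟨c, hc⟩ := exists_ne (1 : G₂)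
    have ha' : (ULift.up a : ULift.{u₂} G₁) ≠ 1 := fun h => ha (congrArg ULift.down h)
    have hb' : (ULift.up b : ULift.{u₂} G₁) ≠ 1 := fun h => hb (congrArg ULift.down h)
    have hab' : (ULift.up a : ULift.{u₂} G₁) ≠ ULift.up b :=
      fun h => hab (congrArg ULift.down h)
    have hc' : (ULift.up c : ULift.{u₁} G₂) ≠ 1 := fun h => hc (congrArg ULift.down h)
    have inj := alt_inj (M := M) (i := true) (j := false) (by simp)
      (ULift.up a) (ULift.up b) (ULift.up c) ha' hb' hab' hc'
    refine ⟨Coprod.inl a * Coprod.inr c, Coprod.inl b * Coprod.inr c, ?_⟩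
    intro l₁ l₂ h
    apply inj
    have key : ∀ l : List Bool,
        (l.map (fun s => (CoprodI.of (M := M) (i := true) (cond s (ULift.up a) (ULift.up b))) *
          CoprodI.of (M := M) (i := false) (ULift.up c))).prod
          = φ ((l.map (fun s =>
              cond s (Coprod.inl a * Coprod.inr c) (Coprod.inl b * Coprod.inr c))).prod) := by
      intro l
      rw [map_list_prod, List.map_map]
      refine congrArg List.prod (List.map_congr_left ?_)
      intro s _
      cases s <;>
        · simp only [cond_true, cond_false, map_mul, φ, Coprod.lift_apply_inl,
            Coprod.lift_apply_inr]
          rfl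
    show (fun l : List Bool => _) l₁ = _
    simp only [key]
    exact congrArg φ h
  · obtain ⟨a, b, ha, hb, hab⟩ := hasThree_elim h3
    obtain ⟨c, hc⟩ := exists_ne (1 : G₁)
    have ha' : (ULift.up a : ULift.{u₁} G₂) ≠ 1 := fun h => ha (congrArg ULift.down h)
    have hb' : (ULift.up b : ULift.{u₁} G₂) ≠ 1 := fun h => hb (congrArg ULift.down h)
    have hab' : (ULift.up a : ULift.{u₁} G₂) ≠ ULift.up b :=
      fun h => hab (congrArg ULift.down h)
    have hc' : (ULift.up c : ULift.{u₂} G₁) ≠ 1 := fun h => hc (congrArg ULift.down h)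
    have inj := alt_inj (M := M) (i := false) (j := true) (by simp)
      (ULift.up a) (ULift.up b) (ULift.up c) ha' hb' hab' hc'
    refine ⟨Coprod.inr a * Coprod.inl c, Coprod.inr b * Coprod.inl c, ?_⟩
    intro l₁ l₂ h
    apply inj
    have key : ∀ l : List Bool,
        (l.map (fun s => (CoprodI.of (M := M) (i := false) (cond s (ULift.up a) (ULift.up b))) *
          CoprodI.of (M := M) (i := true) (ULift.up c))).prod
          = φ ((l.map (fun s =>
              cond s (Coprod.inr a * Coprod.inl c) (Coprod.inr b * Coprod.inl c))).prod) := by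
      intro l
      rw [map_list_prod, List.map_map]
      refine congrArg List.prod (List.map_congr_left ?_)
      intro s _
      cases s <;>
        · simp only [cond_true, cond_false, map_mul, φ, Coprod.lift_apply_inl,
            Coprod.lift_apply_inr]
          rfl
    show (fun l : List Bool => _) l₁ = _
    simp only [key]
    exact congrArg φ h

section WordLength

variable {G : Type*} [Group G]

theorem wordLength_le {S : Set G} {g : G} (l : List G)
    (hl : ∀ x ∈ l, x ∈ S ∨ x⁻¹ ∈ S) (hp : l.prod = g) :
    wordLength S g ≤ l.length :=
  Nat.sInf_le ⟨l, hl, rfl, hp⟩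

theorem exists_rep (E : Finset G) (hE : Subgroup.closure (E : Set G) = ⊤) (g : G) :
    ∃ l : List G, (∀ x ∈ l, x ∈ (E : Set G) ∨ x⁻¹ ∈ (E : Set G)) ∧ l.prod = g := by
  have hg : g ∈ Subgroup.closure (E : Set G) := hE ▸ Subgroup.mem_top g
  induction hg using Subgroup.closure_induction with
  | mem x hx =>
    refine ⟨[x], ?_, by simp⟩
    intro z hz
    rw [List.mem_singleton] at hz
    exact hz ▸ Or.inl hx
  | one => exact ⟨[], by simp, rfl⟩
  | mul x y _ _ hx hy =>
    obtain ⟨l₁, h₁, p₁⟩ := hx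
    obtain ⟨l₂, h₂, p₂⟩ := hy
    refine ⟨l₁ ++ l₂, ?_, by rw [List.prod_append, p₁, p₂]⟩
    intro z hz
    rw [List.mem_append] at hz
    rcases hz with hz | hz
    · exact h₁ z hz
    · exact h₂ z hz
  | inv x _ hx =>
    obtain ⟨l, h, p⟩ := hx
    refine ⟨(l.map fun z => z⁻¹).reverse, ?_, by rw [← List.prod_inv_reverse, p]⟩
    intro z hz
    simp only [List.mem_reverse, List.mem_map] at hz
    obtain ⟨y, hy, rfl⟩ := hz
    rcases h y hy with h' | h'
    · exact Or.inr (by simpa using h')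
    · exact Or.inl h'

theorem exists_min_rep {S : Set G} {g : G}
    (hne : ∃ l : List G, (∀ x ∈ l, x ∈ S ∨ x⁻¹ ∈ S) ∧ l.prod = g) :
    ∃ l : List G, (∀ x ∈ l, x ∈ S ∨ x⁻¹ ∈ S) ∧ l.length = wordLength S g ∧ l.prod = g := by
  have : wordLength S g ∈
      {n | ∃ l : List G, (∀ x ∈ l, x ∈ S ∨ x⁻¹ ∈ S) ∧ l.length = n ∧ l.prod = g} := by
    apply Nat.sInf_mem
    obtain ⟨l, hl, hp⟩ := hne
    exact ⟨l.length, l, hl, rfl, hp⟩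
  exact this

theorem wordLength_mul_le {S : Set G}
    (hrep : ∀ g : G, ∃ l : List G, (∀ x ∈ l, x ∈ S ∨ x⁻¹ ∈ S) ∧ l.prod = g) (g h : G) :
    wordLength S (g * h) ≤ wordLength S g + wordLength S h := by
  obtain ⟨l₁, h₁, len₁, p₁⟩ := exists_min_rep (hrep g)
  obtain ⟨l₂, h₂, len₂, p₂⟩ := exists_min_rep (hrep h)
  have := wordLength_le (S := S) (g := g * h) (l₁ ++ l₂)
    (by simp only [List.mem_append]; rintro z (hz | hz); exacts [h₁ z hz, h₂ z hz])
    (by rw [List.prod_append, p₁, p₂])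
  simpa [len₁, len₂] using this

theorem ball_finite (E : Finset G)
    (hrep : ∀ g : G, ∃ l : List G,
      (∀ x ∈ l, x ∈ (E : Set G) ∨ x⁻¹ ∈ (E : Set G)) ∧ l.prod = g) (k : ℕ) :
    {g : G | wordLength (E : Set G) g ≤ k}.Finite := by
  classical
  set A : Set G := (E : Set G) ∪ (E : Set G)⁻¹ with hA
  have hAfin : A.Finite := E.finite_toSet.union E.finite_toSet.inv
  haveI : Finite ↥A := hAfin.to_subtype
  have hT : {l : List G | (∀ x ∈ l, x ∈ A) ∧ l.length ≤ k}.Finite := by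
    apply Set.Finite.subset (((List.finite_length_le ↥A k).image (List.map Subtype.val)))
    rintro l ⟨hmem, hlen⟩
    refine ⟨l.attach.map fun x => (⟨x.1, hmem x.1 x.2⟩ : ↥A), by simpa using hlen, ?_⟩
    simp [List.map_map]
  apply Set.Finite.subset (hT.image List.prod)
  intro g hg
  obtain ⟨l, hl, hlen, hp⟩ := exists_min_rep (hrep g)
  refine ⟨l, ⟨?_, by rw [hlen]; exact hg⟩, hp⟩
  intro x hx
  rcases hl x hx with h | h
  · exact Or.inl h
  · exact Or.inr (by simpa using h)

end WordLength

end FPEG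

theorem free_product_exponential_growth
    {G₁ G₂ : Type*} [Group G₁] [Group G₂] [Nontrivial G₁] [Nontrivial G₂]
    [Group.FG G₁] [Group.FG G₂]
    (h3 : HasThree G₁ ∨ HasThree G₂)
    (E : Finset (Coprod G₁ G₂)) (hE : Subgroup.closure (E : Set (Coprod G₁ G₂)) = ⊤) :
    ∃ lam : ℝ, 1 < lam ∧ ∃ k₀ : ℕ, ∀ k : ℕ, k₀ ≤ k →
      lam ^ k ≤
        (Nat.card {g : Coprod G₁ G₂ | wordLength (E : Set (Coprod G₁ G₂)) g ≤ k} : ℝ) := by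
  classical
  obtain ⟨x, y, hinj⟩ := FPEG.exists_free_pair h3
  set S : Set (Coprod G₁ G₂) := (E : Set (Coprod G₁ G₂)) with hS
  have hrep := FPEG.exists_rep E hE
  set C : ℕ := max (max (wordLength S x) (wordLength S y)) 1 with hCdef
  have hC1 : 1 ≤ C := le_max_right _ _
  have hC0 : 0 < C := hC1
  have hCx : wordLength S x ≤ C := le_trans (le_max_left _ _) (le_max_left _ _)
  have hCy : wordLength S y ≤ C := le_trans (le_max_right _ _) (le_max_left _ _)
  have hCpos : (0 : ℝ) < 2 * (C : ℝ) := by positivity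
  refine ⟨(2 : ℝ) ^ ((1 : ℝ) / (2 * (C : ℝ))), ?_, C, ?_⟩
  · have : (2 : ℝ) ^ (0 : ℝ) < (2 : ℝ) ^ ((1 : ℝ) / (2 * (C : ℝ))) := by
      rw [Real.rpow_lt_rpow_left_iff (by norm_num : (1:ℝ) < 2)]
      positivity
    simpa using this
  · intro k hk
    set m : ℕ := k / C with hm
    have hm1 : 1 ≤ m := (Nat.one_le_div_iff hC0).2 hk
    have hmk : m * C ≤ k := Nat.div_mul_le_self k C
    have hk2 : k ≤ 2 * C * m := by
      have h1 : k < (m + 1) * C := by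
        rw [← Nat.div_lt_iff_lt_mul hC0]
        omega
      have h2 : C ≤ C * m := Nat.le_mul_of_pos_right C hm1
      nlinarith
    -- word length bound
    have hlen : ∀ l : List Bool,
        wordLength S ((l.map fun s => cond s x y).prod) ≤ l.length * C := by
      intro l
      induction l with
      | nil =>
        simpa using FPEG.wordLength_le (S := S) ([] : List (Coprod G₁ G₂)) (by simp) (by simp)
      | cons s l ih =>
        calc wordLength S (cond s x y * (l.map fun s => cond s x y).prod)
            ≤ wordLength S (cond s x y)
              + wordLength S ((l.map fun s => cond s x y).prod) :=
              FPEG.wordLength_mul_le hrep _ _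
          _ ≤ C + l.length * C := by
              gcongr
              cases s
              · exact hCy
              · exact hCx
          _ = (s :: l).length * C := by simp [add_mul, add_comm]
    -- finiteness
    have hfin : {g : Coprod G₁ G₂ | wordLength S g ≤ k}.Finite := FPEG.ball_finite E hrep k
    haveI : Finite ↥{g : Coprod G₁ G₂ | wordLength S g ≤ k} := hfin.to_subtype
    -- the injection
    set ψ : (Fin m → Bool) → ↥{g : Coprod G₁ G₂ | wordLength S g ≤ k} :=
      fun v => ⟨((List.ofFn v).map fun s => cond s x y).prod, by
        have := hlen (List.ofFn v)
        simp only [List.length_ofFn] at this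
        exact Set.mem_setOf.2 (this.trans hmk)⟩ with hψ
    have hψinj : Function.Injective ψ := by
      intro v w hvw
      have h1 : List.ofFn v = List.ofFn w := hinj (congrArg Subtype.val hvw)
      exact List.ofFn_injective h1
    have hcard : 2 ^ m ≤ Nat.card ↥{g : Coprod G₁ G₂ | wordLength S g ≤ k} := by
      have h1 : Nat.card (Fin m → Bool) = 2 ^ m := by
        simp [Nat.card_eq_fintype_card]
      calc 2 ^ m = Nat.card (Fin m → Bool) := h1.symm
        _ ≤ _ := Nat.card_le_card_of_injective ψ hψinj
    -- real computation
    have hexp : (1 : ℝ) / (2 * (C : ℝ)) * (k : ℕ) ≤ (m : ℝ) := by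
      rw [div_mul_eq_mul_div, one_mul, div_le_iff₀ hCpos]
      have : (k : ℝ) ≤ 2 * (C : ℝ) * (m : ℝ) := by exact_mod_cast hk2
      linarith
    calc ((2 : ℝ) ^ ((1 : ℝ) / (2 * (C : ℝ)))) ^ k
        = (2 : ℝ) ^ ((1 : ℝ) / (2 * (C : ℝ)) * (k : ℕ)) := by
          rw [← Real.rpow_natCast ((2 : ℝ) ^ ((1 : ℝ) / (2 * (C : ℝ)))) k,
            ← Real.rpow_mul (by norm_num)]
      _ ≤ (2 : ℝ) ^ ((m : ℕ) : ℝ) := Real.rpow_le_rpow_of_exponent_le one_le_two hexp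
      _ = ((2 ^ m : ℕ) : ℝ) := by rw [Real.rpow_natCast]; push_cast; ring
      _ ≤ _ := Nat.cast_le.2 hcard
end

section
/- Let G₁ and G₂ be nontrivial groups, not both of order 2. Then the free product G₁ * G₂ contains, for every r ≥ 1, at least 2^r / r pairwise non-conjugate elements each of which is a product of at most 3r generators from fixed generating sets of G₁ and G₂. -/
/-!
STATEMENT 11: in a free product of nontrivial groups, not both of order 2, for every
`r ≥ 1` there are at least `2^r / r` pairwise non-conjugate elements, each of word
length at most `3r` with respect to the generating set coming from fixed generating
sets of the factors.
-/

open Monoid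

set_option linter.unusedSectionVars false

open List
open Monoid.CoprodI (Word of)

namespace FPAux

variable {M : Bool → Type*} [∀ i, Group (M i)]

/-- Product of a list of letters in the free product. -/
def prodL (l : List (Σ i, M i)) : Monoid.CoprodI M := (l.map fun p => of p.2).prod

@[simp] lemma prodL_nil : prodL ([] : List (Σ i, M i)) = 1 := rfl

@[simp] lemma prodL_cons (p : Σ i, M i) (l : List (Σ i, M i)) :
    prodL (p :: l) = of p.2 * prodL l := by simp [prodL]

@[simp] lemma prodL_append (l l' : List (Σ i, M i)) :
    prodL (l ++ l') = prodL l * prodL l' := by simp [prodL]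

@[simp] lemma prodL_singleton (p : Σ i, M i) : prodL [p] = of p.2 := by simp

/-- Letterwise inverse reversed list. -/
def invrev (l : List (Σ i, M i)) : List (Σ i, M i) :=
  (l.map fun p => ⟨p.1, p.2⁻¹⟩).reverse

@[simp] lemma prodL_invrev (l : List (Σ i, M i)) : prodL (invrev l) = (prodL l)⁻¹ := by
  induction l with
  | nil => simp [invrev]
  | cons p l ih => simp [invrev, prodL] at ih ⊢; simp [ih, mul_comm]

/-- A list of letters is `Good` if it is a reduced word. -/
def Good (l : List (Σ i, M i)) : Prop :=
  (∀ p ∈ l, p.2 ≠ (1 : M p.1)) ∧ l.IsChain (fun p q => p.1 ≠ q.1)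

lemma prodL_good_injective {l l' : List (Σ i, M i)} (h : Good l) (h' : Good l')
    (heq : prodL l = prodL l') : l = l' := by
  have e1 : (Word.mk l h.1 h.2 : Word M).prod = prodL l := rfl
  have e2 : (Word.mk l' h'.1 h'.2 : Word M).prod = prodL l' := rfl
  have : (Word.mk l h.1 h.2 : Word M) = Word.mk l' h'.1 h'.2 := by
    have hinj : Function.Injective (Word.prod : Word M → Monoid.CoprodI M) := by
      letI : ∀ i, DecidableEq (M i) := fun i => Classical.decEq _
      exact (Word.equiv (M := M)).symm.injective
    exact hinj (by rw [e1, e2, heq])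
  exact congrArg Word.toList this

/-- Cyclically reduced word. -/
def CGood (l : List (Σ i, M i)) : Prop :=
  Good l ∧ l ≠ [] ∧ ∀ x ∈ l.getLast?, ∀ y ∈ l.head?, x.1 ≠ y.1

lemma CGood.rotate {l l' : List (Σ i, M i)} (h : CGood l) (hr : l ~r l') : CGood l' := by
  obtain ⟨n, hn, rfl⟩ := isRotated_iff_mod.mp hr
  rw [rotate_eq_drop_append_take hn]
  obtain ⟨⟨hne, hch⟩, hnil, hcyc⟩ := h
  set l₁ := l.take n with hl₁
  set l₂ := l.drop n with hl₂
  have hsplit : l₁ ++ l₂ = l := take_append_drop n l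
  rcases eq_or_ne l₂ [] with he₂ | hl₂ne
  · rw [he₂] at hsplit ⊢
    simp only [nil_append]
    simp only [append_nil] at hsplit
    rw [hsplit]; exact ⟨⟨hne, hch⟩, hnil, hcyc⟩
  rcases eq_or_ne l₁ [] with he₁ | hl₁ne
  · rw [he₁] at hsplit ⊢
    simp only [nil_append] at hsplit
    rw [append_nil, hsplit]; exact ⟨⟨hne, hch⟩, hnil, hcyc⟩
  have hc : (l₁ ++ l₂).IsChain (fun p q : (Σ i, M i) => p.1 ≠ q.1) := by rw [hsplit]; exact hch
  rw [isChain_append] at hc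
  refine ⟨⟨?_, ?_⟩, by simp [hl₂ne], ?_⟩
  · intro p hp
    refine hne p ?_
    rw [← hsplit]
    rcases mem_append.mp hp with h | h
    · exact mem_append.mpr (Or.inr h)
    · exact mem_append.mpr (Or.inl h)
  · rw [isChain_append]
    refine ⟨hc.2.1, hc.1, ?_⟩
    intro x hx y hy
    refine hcyc x ?_ y ?_
    · rw [← hsplit, getLast?_append_of_ne_nil _ hl₂ne]; exact hx
    · rw [← hsplit, head?_append_of_ne_nil _ hl₁ne]; exact hy
  · intro x hx y hy
    rw [getLast?_append_of_ne_nil _ hl₁ne] at hx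
    rw [head?_append_of_ne_nil _ hl₂ne] at hy
    exact hc.2.2 x hx y hy


lemma mem_getLast?_cons {α : Type*} {x a : α} {l : List α} (h : x ∈ l.getLast?) :
    x ∈ (a :: l).getLast? := by
  cases l with
  | nil => simp at h
  | cons b l => rw [getLast?_cons_cons]; exact h

/-- The invariant set: conjugates of the cyclically reduced word `w₀`. -/
def TT (w₀ : List (Σ i, M i)) (z : Monoid.CoprodI M) : Prop :=
  (∃ l, l ~r w₀ ∧ z = prodL l) ∨
  (∃ (d : List (Σ i, M i)) (γ : Bool) (p q : M γ) (core : List (Σ i, M i)),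
    p ≠ 1 ∧ q ≠ 1 ∧ ((core ++ [⟨γ, q * p⟩]) ~r w₀) ∧ Good d ∧
    (∀ x ∈ d.getLast?, x.1 ≠ γ) ∧
    z = prodL d * (of p * prodL core * of q) * (prodL d)⁻¹)

lemma conj_conj {G : Type*} [Group G] (a b c : G) :
    a * (b * c * b⁻¹) * a⁻¹ = (a * b) * c * (a * b)⁻¹ := by group

section
variable {w₀ : List (Σ i, M i)} (hw₀ : CGood w₀)

include hw₀ in
lemma TT_conj_letter {t : Bool} (g : M t) {z} (h : TT w₀ z) :
    TT w₀ (of g * z * (of g)⁻¹) := by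
  rcases eq_or_ne g 1 with rfl | hg
  · simpa using h
  rcases h with ⟨l, hrot, rfl⟩ | ⟨d, γ, p, q, core, hp, hq, hrot, hd, hlast, rfl⟩
  · -- conjugating a rotation
    have hC : CGood l := hw₀.rotate hrot.symm
    obtain he | ⟨c0, pβ, rfl⟩ := l.eq_nil_or_concat
    · exact absurd he hC.2.1
    obtain ⟨β, k⟩ := pβ
    simp only [concat_eq_append] at hrot hC ⊢
    cases c0 with
    | nil =>
      exact absurd (hC.2.2 ⟨β, k⟩ (by simp) ⟨β, k⟩ (by simp) rfl) (fun h => h)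
    | cons pα c1 =>
      obtain ⟨α, hh⟩ := pα
      have hαβ : β ≠ α :=
        hC.2.2 ⟨β, k⟩ (by rw [cons_append, ← cons_append, getLast?_concat]; rfl) ⟨α, hh⟩ (by simp)
      have ht : t = α ∨ t = β := by
        rcases eq_or_ne t α with h | h
        · exact Or.inl h
        · exact Or.inr ((Bool.eq_not_of_ne h).trans (Bool.eq_not_of_ne hαβ).symm)
      rcases ht with rfl | rfl
      · -- t = α
        by_cases hgh : g * hh = 1
        · left
          refine ⟨(c1 ++ [⟨β, k⟩]) ++ [⟨t, hh⟩], (isRotated_concat _ _).trans (by simpa using hrot), ?_⟩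
          have hg' : g = hh⁻¹ := eq_inv_of_mul_eq_one_left hgh
          subst hg'
          simp only [prodL_cons, prodL_append, prodL_singleton, prodL_nil, map_mul, map_inv]
          group
        · right
          have hqp : g⁻¹ * (g * hh) = hh := by group
          refine ⟨[], t, g * hh, g⁻¹, c1 ++ [⟨β, k⟩], hgh, inv_ne_one.mpr hg, ?_, ⟨by simp, by simp⟩, by simp, ?_⟩
          · rw [hqp]
            exact (isRotated_concat _ _).trans (by simpa using hrot)
          · simp only [prodL_cons, prodL_append, prodL_singleton, prodL_nil, map_mul, map_inv]
            group
      · -- t = β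
        by_cases hkg : k * g⁻¹ = 1
        · have hg' : k = g := mul_inv_eq_one.mp hkg
          rw [hg'] at hrot
          left
          refine ⟨⟨t, g⟩ :: (⟨α, hh⟩ :: c1), ?_, ?_⟩
          · exact (isRotated_concat _ _).symm.trans (by simpa using hrot)
          · rw [hg']
            simp only [prodL_cons, prodL_append, prodL_singleton, prodL_nil, map_mul, map_inv]
            group
        · right
          have hqp : (k * g⁻¹) * g = k := by group
          refine ⟨[], t, g, k * g⁻¹, ⟨α, hh⟩ :: c1, hg, hkg, ?_, ⟨by simp, by simp⟩, by simp, ?_⟩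
          · rw [hqp]; exact (by simpa using hrot)
          · simp only [prodL_cons, prodL_append, prodL_singleton, prodL_nil, map_mul, map_inv]
            group
  · -- conjugating an extended form
    cases d with
    | nil =>
      by_cases ht : t = γ
      · subst ht
        by_cases h1 : g * p = 1
        · left
          have hg' : g = p⁻¹ := eq_inv_of_mul_eq_one_left h1
          subst hg'
          refine ⟨core ++ [⟨t, q * p⟩], hrot, ?_⟩
          simp only [prodL_cons, prodL_append, prodL_singleton, prodL_nil, map_mul, map_inv]
          group
        · by_cases h2 : q * g⁻¹ = 1
          · left
            have hg' : q = g := mul_inv_eq_one.mp h2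
            rw [hg'] at hrot
            refine ⟨⟨t, g * p⟩ :: core, (isRotated_concat _ _).symm.trans hrot, ?_⟩
            rw [hg']
            simp only [prodL_cons, prodL_append, prodL_singleton, prodL_nil, map_mul, map_inv]
            group
          · right
            have hqp : (q * g⁻¹) * (g * p) = q * p := by group
            refine ⟨[], t, g * p, q * g⁻¹, core, h1, h2, by rw [hqp]; exact hrot,
              ⟨by simp, by simp⟩, by simp, ?_⟩
            simp only [prodL_cons, prodL_append, prodL_singleton, prodL_nil, map_mul, map_inv]
            group
      · right
        refine ⟨[⟨t, g⟩], γ, p, q, core, hp, hq, hrot, ⟨by simpa using hg, by simp⟩,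
          by simpa using ht, ?_⟩
        simp only [prodL_cons, prodL_append, prodL_singleton, prodL_nil, map_mul, map_inv]
        group
    | cons pδ d' =>
      obtain ⟨δ, y⟩ := pδ
      by_cases ht : t = δ
      · subst ht
        by_cases hgy : g * y = 1
        · right
          have h1 : of g * of y = (1 : Monoid.CoprodI M) := by
            rw [← map_mul, hgy, map_one]
          refine ⟨d', γ, p, q, core, hp, hq, hrot,
            ⟨fun x hx => hd.1 x (mem_cons_of_mem _ hx), hd.2.tail⟩,
            fun x hx => hlast x (mem_getLast?_cons hx), ?_⟩
          have hy' : (of y : Monoid.CoprodI M) = (of g)⁻¹ := eq_inv_of_mul_eq_one_right h1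
          simp only [prodL_cons]
          rw [hy']
          group
        · right
          have hch := isChain_cons.mp hd.2
          refine ⟨⟨t, g * y⟩ :: d', γ, p, q, core, hp, hq, hrot,
            ⟨?_, isChain_cons.mpr ⟨hch.1, hch.2⟩⟩, ?_, ?_⟩
          · intro x hx
            rcases mem_cons.mp hx with rfl | hx
            · exact hgy
            · exact hd.1 x (mem_cons_of_mem _ hx)
          · cases d' with
            | nil => simpa using hlast ⟨t, y⟩ (by simp)
            | cons b l =>
              intro x hx
              rw [getLast?_cons_cons] at hx
              exact hlast x (by rw [getLast?_cons_cons]; exact hx)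
          · simp only [prodL_cons, map_mul]
            group
      · right
        refine ⟨⟨t, g⟩ :: ⟨δ, y⟩ :: d', γ, p, q, core, hp, hq, hrot,
          ⟨?_, isChain_cons_cons.mpr ⟨ht, hd.2⟩⟩, ?_, ?_⟩
        · intro x hx
          rcases mem_cons.mp hx with rfl | hx
          · exact hg
          · exact hd.1 x hx
        · intro x hx
          rw [getLast?_cons_cons] at hx
          exact hlast x hx
        · simp only [prodL_cons, map_mul]
          group


lemma Good.invrev' {d : List (Σ i, M i)} (hd : Good d) : Good (invrev d) := by
  constructor
  · intro x hx
    simp only [invrev, mem_reverse, mem_map] at hx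
    obtain ⟨p, hp, rfl⟩ := hx
    simpa using inv_ne_one.mpr (hd.1 p hp)
  · rw [invrev, isChain_reverse, isChain_map]
    exact hd.2.imp fun a b h => h.symm

lemma head?_invrev {d : List (Σ i, M i)} :
    (invrev d).head? = d.getLast?.map (fun p => (⟨p.1, p.2⁻¹⟩ : Σ i, M i)) := by
  rw [invrev, head?_reverse, getLast?_map]

include hw₀ in
lemma TT_conj (c z : Monoid.CoprodI M) (h : TT w₀ z) : TT w₀ (c * z * c⁻¹) := by
  induction c using Monoid.CoprodI.induction_left with
  | one => simpa using h
  | mul m x ih =>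
    have heq : (of m * x) * z * (of m * x)⁻¹ = of m * (x * z * x⁻¹) * (of m)⁻¹ := by group
    rw [heq]
    exact TT_conj_letter hw₀ m ih

include hw₀ in
theorem conj_isRotated_of_good {w' : List (Σ i, M i)} (hw' : Good w')
    (hlen : w'.length = w₀.length) (h : IsConj (prodL w₀) (prodL w')) : w' ~r w₀ := by
  obtain ⟨c, hc⟩ := isConj_iff.mp h
  have hT : TT w₀ (prodL w') := hc ▸ TT_conj hw₀ c _ (Or.inl ⟨w₀, IsRotated.refl _, rfl⟩)
  rcases hT with ⟨l, hrot, heq⟩ | ⟨d, γ, p, q, core, hp, hq, hrot, hd, hlast, heq⟩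
  · have : w' = l := prodL_good_injective hw' (hw₀.rotate hrot.symm).1 heq
    exact this ▸ hrot
  · exfalso
    have hCu : CGood (core ++ [⟨γ, q * p⟩]) := hw₀.rotate hrot.symm
    have hcore : core ≠ [] := by
      rintro rfl
      exact hCu.2.2 ⟨γ, q * p⟩ (by simp) ⟨γ, q * p⟩ (by simp) rfl
    set E : List (Σ i, M i) := d ++ ((⟨γ, p⟩ :: (core ++ [⟨γ, q⟩])) ++ invrev d) with hE
    have hEeq : prodL w' = prodL E := by
      rw [heq, hE]
      simp only [prodL_cons, prodL_append, prodL_singleton, prodL_nil, prodL_invrev]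
      group
    have hchu := hCu.1.2
    rw [isChain_append] at hchu
    have hheadcore : ∀ y ∈ core.head?, γ ≠ y.1 := by
      intro y hy
      exact hCu.2.2 ⟨γ, q * p⟩ (by rw [getLast?_concat]; rfl) y
        (by rw [head?_append_of_ne_nil _ hcore]; exact hy)
    have hEgood : Good E := by
      constructor
      · intro x hx
        rw [hE] at hx
        simp only [mem_append, mem_cons] at hx
        rcases hx with hx | (rfl | (hx | hx)) | hx
        · exact hd.1 x hx
        · exact hp
        · exact hCu.1.1 x (mem_append.mpr (Or.inl hx))
        · simp only [mem_singleton, mem_nil_iff, or_false] at hx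
          subst hx; exact hq
        · exact (hd.invrev').1 x hx
      · rw [hE, isChain_append]
        refine ⟨hd.2, ?_, ?_⟩
        · rw [isChain_append]
          refine ⟨?_, hd.invrev'.2, ?_⟩
          · rw [isChain_cons]
            refine ⟨?_, ?_⟩
            · intro y hy
              rw [head?_append_of_ne_nil _ hcore] at hy
              exact hheadcore y hy
            · rw [isChain_append]
              exact ⟨hchu.1, isChain_singleton _, fun x hx y hy => by
                simp only [head?_cons, Option.mem_some_iff] at hy
                subst hy
                exact hchu.2.2 x hx ⟨γ, q * p⟩ (by simp)⟩
          · intro x hx y hy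
            rw [← cons_append, getLast?_concat] at hx
            rw [head?_invrev] at hy
            simp only [Option.mem_some_iff] at hx
            subst hx
            simp only [Option.mem_def, Option.map_eq_some_iff] at hy
            obtain ⟨z, hz, rfl⟩ := hy
            exact fun hc => (hlast z hz) hc.symm
        · intro x hx y hy
          rw [head?_append_of_ne_nil _ (by simp)] at hy
          simp only [head?_cons, Option.mem_some_iff] at hy
          subst hy
          exact hlast x hx
    have hwe : w' = E := prodL_good_injective hw' hEgood hEeq
    have hlE : E.length = d.length + (core.length + 2) + d.length := by
      rw [hE]
      simp [invrev, length_append]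
      omega
    have hcl : core.length + 1 = w₀.length := by
      have := hrot.perm.length_eq
      simpa using this
    have := congrArg List.length hwe
    rw [hlen, hlE] at this
    omega

end
section Appl
variable (a : M false) (b : Bool → M true)

/-- The alternating word `a b_{m₁} a b_{m₂} ⋯`. -/
def Lw : List Bool → List (Σ i, M i)
  | [] => []
  | s :: m => ⟨false, a⟩ :: ⟨true, b s⟩ :: Lw m

@[simp] lemma Lw_nil : Lw a b [] = [] := rfl
@[simp] lemma Lw_cons (s m) : Lw a b (s :: m) = ⟨false, a⟩ :: ⟨true, b s⟩ :: Lw a b m := rfl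

lemma Lw_append (m m' : List Bool) : Lw a b (m ++ m') = Lw a b m ++ Lw a b m' := by
  induction m with
  | nil => simp
  | cons s m ih => simp [ih]

@[simp] lemma length_Lw (m : List Bool) : (Lw a b m).length = 2 * m.length := by
  induction m with
  | nil => simp
  | cons s m ih => simp [ih]; omega

lemma head?_Lw {m : List Bool} (h : m ≠ []) : (Lw a b m).head? = some ⟨false, a⟩ := by
  cases m with
  | nil => exact absurd rfl h
  | cons s m => rfl

lemma getLast?_Lw {m : List Bool} (h : m ≠ []) :
    ∃ s, (Lw a b m).getLast? = some ⟨true, b s⟩ := by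
  induction m with
  | nil => exact absurd rfl h
  | cons s m ih =>
    cases m with
    | nil => exact ⟨s, rfl⟩
    | cons s' m' =>
      obtain ⟨u, hu⟩ := ih (cons_ne_nil _ _)
      refine ⟨u, ?_⟩
      rw [Lw_cons, getLast?_cons_cons, Lw_cons, getLast?_cons_cons, getLast?_cons_cons]
      rw [Lw_cons, getLast?_cons_cons] at hu
      exact hu

lemma good_Lw (ha : a ≠ 1) (hb : ∀ s, b s ≠ 1) (m : List Bool) : Good (Lw a b m) := by
  induction m with
  | nil => exact ⟨by simp, isChain_nil⟩
  | cons s m ih =>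
    refine ⟨?_, ?_⟩
    · intro x hx
      rcases mem_cons.mp hx with rfl | hx
      · exact ha
      · rcases mem_cons.mp hx with rfl | hx
        · exact hb s
        · exact ih.1 x hx
    · rw [Lw_cons, isChain_cons_cons]
      refine ⟨by simp, ?_⟩
      rw [isChain_cons]
      refine ⟨?_, ih.2⟩
      intro y hy
      cases m with
      | nil => simp at hy
      | cons s' m' =>
        rw [head?_Lw a b (cons_ne_nil _ _)] at hy
        simp only [Option.mem_some_iff] at hy
        subst hy
        simp

lemma cgood_Lw (ha : a ≠ 1) (hb : ∀ s, b s ≠ 1) {m : List Bool} (h : m ≠ []) :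
    CGood (Lw a b m) := by
  refine ⟨good_Lw a b ha hb m, ?_, ?_⟩
  · cases m with
    | nil => exact absurd rfl h
    | cons s m => simp
  · intro x hx y hy
    obtain ⟨u, hu⟩ := getLast?_Lw a b h
    rw [hu] at hx
    rw [head?_Lw a b h] at hy
    simp only [Option.mem_some_iff] at hx hy
    subst hx; subst hy
    simp

lemma Lw_injective (hbinj : Function.Injective b) :
    ∀ m m' : List Bool, Lw a b m = Lw a b m' → m = m' := by
  intro m
  induction m with
  | nil =>
    intro m' h
    cases m' with
    | nil => rfl
    | cons s' m' => simp at h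
  | cons s m ih =>
    intro m' h
    cases m' with
    | nil => simp at h
    | cons s' m' =>
      simp only [Lw_cons, cons.injEq, true_and] at h
      obtain ⟨h1, h2⟩ := h
      have hbs : b s = b s' := by
        simp only [Sigma.mk.inj_iff, heq_eq_eq, true_and] at h1
        exact h1
      rw [hbinj hbs, ih m' h2]

lemma rotate_cons_one {α : Type*} (x : α) (l : List α) : (x :: l).rotate 1 = l ++ [x] := by
  simpa using rotate_cons_succ l x 0

lemma Lw_rotate_one (m : List Bool) : Lw a b (m.rotate 1) = (Lw a b m).rotate 2 := by
  cases m with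
  | nil => simp
  | cons s m =>
    have h2 : (Lw a b (s :: m)).rotate 2 = ((Lw a b (s :: m)).rotate 1).rotate 1 := by
      rw [rotate_rotate]
    have h3 : (Lw a b (s :: m)).rotate 1 =
        (⟨true, b s⟩ :: Lw a b m) ++ [(⟨false, a⟩ : Σ i, M i)] := by
      rw [Lw_cons, rotate_cons_one]
    have h4 : ((⟨true, b s⟩ :: Lw a b m) ++ [(⟨false, a⟩ : Σ i, M i)]).rotate 1 =
        (Lw a b m ++ [(⟨false, a⟩ : Σ i, M i)]) ++ [(⟨true, b s⟩ : Σ i, M i)] := by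
      rw [cons_append, rotate_cons_one]
    rw [rotate_cons_one, Lw_append, h2, h3, h4]
    simp

lemma Lw_rotate (m : List Bool) (k : ℕ) :
    Lw a b (m.rotate k) = (Lw a b m).rotate (2 * k) := by
  induction k generalizing m with
  | zero => simp
  | succ k ih =>
    have h1 : m.rotate (k + 1) = (m.rotate 1).rotate k := by
      rw [rotate_rotate]; ring_nf
    have h2 : (Lw a b m).rotate (2 * (k + 1)) = ((Lw a b m).rotate 2).rotate (2 * k) := by
      rw [rotate_rotate]; ring_nf
    rw [h1, h2, ih, Lw_rotate_one]

lemma isRotated_Lw_extract (hbinj : Function.Injective b) {m m' : List Bool} (hm : m ≠ [])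
    (h : Lw a b m' ~r Lw a b m) : ∃ k < m.length, m' = m.rotate k := by
  obtain ⟨n, hn, heq⟩ := isRotated_iff_mod.mp h.symm
  have hmpos : 0 < m.length := length_pos_iff.mpr hm
  have hlen' : m'.length = m.length := by
    have hl := congrArg List.length heq
    rw [length_rotate, length_Lw, length_Lw] at hl
    omega
  rw [length_Lw] at hn
  rcases Nat.even_or_odd n with ⟨k, hk⟩ | ⟨k, hk⟩
  · have hk2 : n = 2 * k := by omega
    subst hk2
    have := (Lw_rotate a b m k).trans heq
    have hmm := Lw_injective a b hbinj _ _ this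
    rcases eq_or_lt_of_le (by omega : k ≤ m.length) with hkl | hkl
    · refine ⟨0, hmpos, ?_⟩
      rw [rotate_zero, ← hmm, hkl, rotate_length]
    · exact ⟨k, hkl, hmm.symm⟩
  · exfalso
    have h1 : (Lw a b (m.rotate k)).rotate 1 = (Lw a b m).rotate (2 * k + 1) := by
      rw [Lw_rotate, rotate_rotate]
    have hm'ne : m' ≠ [] := by
      intro hnil
      rw [hnil] at hlen'
      have : m.length = 0 := by simpa using hlen'.symm
      omega
    have hrkne : m.rotate k ≠ [] := by
      intro hnil
      apply hm
      have := congrArg List.length hnil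
      rw [length_rotate] at this
      simpa using this
    obtain ⟨s, mm, hsm⟩ := exists_cons_of_ne_nil hrkne
    have h2 : Lw a b m' = ⟨true, b s⟩ :: (Lw a b mm ++ [(⟨false, a⟩ : Σ i, M i)]) := by
      rw [← heq, hk, ← h1, hsm, Lw_cons, rotate_cons_one]
      simp
    have h3 := head?_Lw a b hm'ne
    rw [h2] at h3
    simp at h3

lemma conj_rotate_CoprodI (ha : a ≠ 1) (hb : ∀ s, b s ≠ 1) (hbinj : Function.Injective b)
    {m m' : List Bool} (hm : m ≠ []) (hlen : m'.length = m.length)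
    (h : IsConj (prodL (Lw a b m)) (prodL (Lw a b m'))) : ∃ k < m.length, m' = m.rotate k := by
  have hrot := conj_isRotated_of_good (cgood_Lw a b ha hb hm) (good_Lw a b ha hb m')
    (by simp [hlen]) h
  exact isRotated_Lw_extract a b hbinj hm hrot

end Appl

section Main

universe u v

/-- The two-factor family of groups, `ULift`ed to a common universe. -/
def MM (G₁ : Type u) (G₂ : Type v) : Bool → Type (max u v) := fun t =>
  Bool.rec (ULift.{v} G₁) (ULift.{u} G₂) t

instance MMgroup (G₁ : Type u) (G₂ : Type v) [Group G₁] [Group G₂] :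
    ∀ t, Group (MM G₁ G₂ t) := fun t =>
  match t with
  | false => inferInstanceAs (Group (ULift G₁))
  | true => inferInstanceAs (Group (ULift G₂))

variable {G₁ : Type u} {G₂ : Type v} [Group G₁] [Group G₂]

/-- The comparison homomorphism from the binary coproduct to the indexed coproduct. -/
noncomputable def ΦHom : Monoid.Coprod G₁ G₂ →* Monoid.CoprodI (MM G₁ G₂) :=
  Monoid.Coprod.lift
    ((@Monoid.CoprodI.of Bool (MM G₁ G₂) _ false).comp
      ((MulEquiv.ulift (α := G₁)).symm.toMonoidHom))
    ((@Monoid.CoprodI.of Bool (MM G₁ G₂) _ true).comp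
      ((MulEquiv.ulift (α := G₂)).symm.toMonoidHom))

lemma isConj_map {G : Type*} {H : Type*} [Group G] [Group H] (f : G →* H) {x y : G}
    (h : IsConj x y) : IsConj (f x) (f y) := by
  obtain ⟨c, hc⟩ := isConj_iff.mp h
  exact isConj_iff.mpr ⟨f c, by rw [← map_inv, ← map_mul, ← map_mul, hc]⟩

@[simp] lemma ΦHom_inl (x : G₁) :
    ΦHom (Monoid.Coprod.inl x) = @Monoid.CoprodI.of Bool (MM G₁ G₂) _ false ⟨x⟩ := by
  simp [ΦHom, Monoid.Coprod.lift_apply_inl]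
  rfl

@[simp] lemma ΦHom_inr (x : G₂) :
    ΦHom (Monoid.Coprod.inr x) = @Monoid.CoprodI.of Bool (MM G₁ G₂) _ true ⟨x⟩ := by
  simp [ΦHom, Monoid.Coprod.lift_apply_inr]
  rfl

/-- The element `a b_{m₁} a b_{m₂} ⋯` of the binary coproduct. -/
def gC (a : G₁) (b : Bool → G₂) (m : List Bool) : Monoid.Coprod G₁ G₂ :=
  (m.map fun s => Monoid.Coprod.inl a * Monoid.Coprod.inr (b s)).prod

lemma ΦHom_gC (a : G₁) (b : Bool → G₂) (m : List Bool) :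
    ΦHom (gC a b m) =
      prodL (M := MM G₁ G₂) (Lw (M := MM G₁ G₂) ⟨a⟩ (fun s => ⟨b s⟩) m) := by
  induction m with
  | nil => simp [gC]; rfl
  | cons s m ih =>
    rw [gC, map_cons, prod_cons, map_mul, map_mul, ΦHom_inl, ΦHom_inr]
    rw [gC] at ih
    rw [ih, mul_assoc]; rfl

/-- Explicit word representing `gC a b m` over the generators. -/
def wlist (a : G₁) (lb : Bool → List G₂) : List Bool → List (Monoid.Coprod G₁ G₂)
  | [] => []
  | s :: m => Monoid.Coprod.inl a :: ((lb s).map Monoid.Coprod.inr ++ wlist a lb m)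

lemma prod_wlist (a : G₁) (b : Bool → G₂) (lb : Bool → List G₂)
    (hlbp : ∀ s, (lb s).prod = b s) (m : List Bool) :
    (wlist a lb m).prod = gC a b m := by
  induction m with
  | nil => simp [wlist, gC]
  | cons s m ih =>
    have hinr : ((lb s).map (Monoid.Coprod.inr : G₂ →* Monoid.Coprod G₁ G₂)).prod =
        Monoid.Coprod.inr (b s) := by
      rw [← map_list_prod, hlbp]
    rw [wlist, prod_cons, prod_append, ih, hinr]
    simp [gC, mul_assoc]

lemma length_wlist (a : G₁) (lb : Bool → List G₂) (hlbl : ∀ s, (lb s).length ≤ 2)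
    (m : List Bool) : (wlist a lb m).length ≤ 3 * m.length := by
  induction m with
  | nil => simp [wlist]
  | cons s m ih =>
    rw [wlist]
    simp only [length_cons, length_append, length_map]
    have := hlbl s
    omega

lemma mem_wlist (a : G₁) (lb : Bool → List G₂) (E₁ : Finset G₁) (E₂ : Finset G₂)
    (haE : a ∈ E₁) (hlbE : ∀ s, ∀ x ∈ lb s, x ∈ E₂) (m : List Bool) :
    ∀ x ∈ wlist a lb m,
      x ∈ (Monoid.Coprod.inl '' (E₁ : Set G₁) ∪ Monoid.Coprod.inr '' (E₂ : Set G₂)) := by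
  induction m with
  | nil => simp [wlist]
  | cons s m ih =>
    intro x hx
    rw [wlist, mem_cons] at hx
    rcases hx with rfl | hx
    · exact Or.inl ⟨a, haE, rfl⟩
    · rcases mem_append.mp hx with hx | hx
      · obtain ⟨y, hy, rfl⟩ := mem_map.mp hx
        exact Or.inr ⟨y, hlbE s y hy, rfl⟩
      · exact ih x hx

lemma main_asym (E₁ : Finset G₁) (E₂ : Finset G₂)
    (a : G₁) (ha1 : a ≠ 1) (haE : a ∈ E₁)
    (b : Bool → G₂) (hb1 : ∀ s, b s ≠ 1) (hbinj : Function.Injective b)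
    (lb : Bool → List G₂)
    (hlbE : ∀ s, ∀ x ∈ lb s, x ∈ E₂)
    (hlbl : ∀ s, (lb s).length ≤ 2)
    (hlbp : ∀ s, (lb s).prod = b s)
    (r : ℕ) (hr : 1 ≤ r) :
    ∃ S : Finset (Monoid.Coprod G₁ G₂),
      ((2 : ℝ) ^ r / r ≤ S.card) ∧
      (∀ g ∈ S, ∃ l : List (Monoid.Coprod G₁ G₂),
        (∀ x ∈ l,
          x ∈ (Monoid.Coprod.inl '' (E₁ : Set G₁) ∪ Monoid.Coprod.inr '' (E₂ : Set G₂)) ∨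
          x⁻¹ ∈ (Monoid.Coprod.inl '' (E₁ : Set G₁) ∪ Monoid.Coprod.inr '' (E₂ : Set G₂))) ∧
        l.length ≤ 3 * r ∧ l.prod = g) ∧
      (S : Set (Monoid.Coprod G₁ G₂)).Pairwise fun g g' => ¬ IsConj g g' := by
  classical
  set aC : MM G₁ G₂ false := ⟨a⟩ with haC
  set bC : Bool → MM G₁ G₂ true := fun s => ⟨b s⟩ with hbC
  have haC1 : aC ≠ 1 := fun h => ha1 (congrArg ULift.down h)
  have hbC1 : ∀ s, bC s ≠ 1 := fun s h => hb1 s (congrArg ULift.down h)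
  have hbCinj : Function.Injective bC := fun s s' h => hbinj (congrArg ULift.down h)
  -- key conjugacy rigidity
  have key : ∀ v v' : Fin r → Bool,
      IsConj (gC a b (List.ofFn v)) (gC a b (List.ofFn v')) →
      ∃ k < r, List.ofFn v' = (List.ofFn v).rotate k := by
    intro v v' hconj
    have hm : List.ofFn v ≠ [] := by
      intro h
      have := congrArg List.length h
      simp at this
      omega
    have hΦ : IsConj (prodL (M := MM G₁ G₂) (Lw (M := MM G₁ G₂) aC bC (List.ofFn v)))
        (prodL (M := MM G₁ G₂) (Lw (M := MM G₁ G₂) aC bC (List.ofFn v'))) := by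
      rw [← ΦHom_gC, ← ΦHom_gC]
      exact isConj_map ΦHom hconj
    have := conj_rotate_CoprodI aC bC haC1 hbC1 hbCinj hm (by simp) hΦ
    simpa using this
  set φ : (Fin r → Bool) → ConjClasses (Monoid.Coprod G₁ G₂) :=
    fun v => ConjClasses.mk (gC a b (List.ofFn v)) with hφ
  set T : Finset (ConjClasses (Monoid.Coprod G₁ G₂)) := Finset.image φ Finset.univ with hT
  have hfib : ∀ c ∈ T, (Finset.univ.filter fun v => φ v = c).card ≤ r := by
    intro c hc
    obtain ⟨v₀, _, rfl⟩ := Finset.mem_image.mp hc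
    have hle := Finset.card_le_card_of_injOn
      (s := Finset.univ.filter fun v => φ v = φ v₀)
      (t := (Finset.range r).image fun k => (List.ofFn v₀).rotate k)
      (f := fun v : Fin r → Bool => List.ofFn v) ?_ ?_
    · exact hle.trans ((Finset.card_image_le).trans (by simp))
    · intro v hv
      rw [Finset.mem_coe, Finset.mem_filter] at hv
      have hconj : IsConj (gC a b (List.ofFn v₀)) (gC a b (List.ofFn v)) :=
        (ConjClasses.mk_eq_mk_iff_isConj.mp hv.2).symm
      obtain ⟨k, hk, hkeq⟩ := key v₀ v hconj
      exact Finset.mem_image.mpr ⟨k, Finset.mem_range.mpr hk, hkeq.symm⟩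
    · intro v _ v' _ h
      exact List.ofFn_injective h
  have hcount : (2 : ℕ) ^ r ≤ r * T.card := by
    have h1 := Finset.card_le_mul_card_image (s := (Finset.univ : Finset (Fin r → Bool)))
      (f := φ) r hfib
    have h2 : (Finset.univ : Finset (Fin r → Bool)).card = 2 ^ r := by
      simp [Finset.card_univ]
    rw [h2] at h1
    exact h1
  set sec : ConjClasses (Monoid.Coprod G₁ G₂) → (Fin r → Bool) :=
    fun c => if h : ∃ v, φ v = c then h.choose else fun _ => false with hsecdef
  have hsec : ∀ c ∈ T, φ (sec c) = c := by
    intro c hc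
    obtain ⟨v, _, rfl⟩ := Finset.mem_image.mp hc
    have hex : ∃ w, φ w = φ v := ⟨v, rfl⟩
    simp only [hsecdef, dif_pos hex]
    exact hex.choose_spec
  refine ⟨T.image fun c => gC a b (List.ofFn (sec c)), ?_, ?_, ?_⟩
  · have hinj : Set.InjOn (fun c => gC a b (List.ofFn (sec c))) T := by
      intro c hc c' hc' h
      have h1 : φ (sec c) = φ (sec c') := congrArg ConjClasses.mk h
      rw [hsec c hc, hsec c' hc'] at h1
      exact h1
    rw [Finset.card_image_of_injOn hinj]
    have hr0 : (0 : ℝ) < r := by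
      have : 0 < r := hr
      exact_mod_cast this
    rw [div_le_iff₀ hr0]
    calc ((2 : ℝ)) ^ r = ((2 ^ r : ℕ) : ℝ) := by push_cast; ring
    _ ≤ ((r * T.card : ℕ) : ℝ) := by exact_mod_cast hcount
    _ = T.card * r := by push_cast; ring
  · intro g hg
    obtain ⟨c, _, rfl⟩ := Finset.mem_image.mp hg
    refine ⟨wlist a lb (List.ofFn (sec c)), ?_, ?_, ?_⟩
    · intro x hx
      exact Or.inl (mem_wlist a lb E₁ E₂ haE hlbE _ x hx)
    · have := length_wlist a lb hlbl (List.ofFn (sec c))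
      simpa using this
    · exact prod_wlist a b lb hlbp _
  · intro x hx y hy hxy hconj
    obtain ⟨c, hc, rfl⟩ := Finset.mem_image.mp (Finset.mem_coe.mp hx)
    obtain ⟨c', hc', rfl⟩ := Finset.mem_image.mp (Finset.mem_coe.mp hy)
    apply hxy
    have h1 : φ (sec c) = φ (sec c') := ConjClasses.mk_eq_mk_iff_isConj.mpr hconj
    rw [hsec c hc, hsec c' hc'] at h1
    exact congrArg (fun c => gC a b (List.ofFn (sec c))) h1

end Main

section Choose

lemma exists_gen_ne_one {G : Type*} [Group G] [Nontrivial G] (E : Finset G)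
    (hE : Subgroup.closure (E : Set G) = ⊤) : ∃ a ∈ E, a ≠ 1 := by
  by_contra h
  push_neg at h
  obtain ⟨x, hx⟩ := exists_ne (1 : G)
  have hsub : (E : Set G) ⊆ ((⊥ : Subgroup G) : Set G) := by
    intro e he
    simp only [SetLike.mem_coe, Subgroup.mem_bot]
    exact h e (Finset.mem_coe.mp he)
  have hle : (⊤ : Subgroup G) ≤ ⊥ := hE ▸ (Subgroup.closure_le ⊥).mpr hsub
  exact hx (Subgroup.mem_bot.mp (hle (Subgroup.mem_top x)))

lemma exists_pair {G : Type*} [Group G] [Nontrivial G] (E : Finset G)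
    (hE : Subgroup.closure (E : Set G) = ⊤) (hcard : Nat.card G ≠ 2) :
    ∃ (b : Bool → G) (lb : Bool → List G),
      (∀ s, b s ≠ 1) ∧ Function.Injective b ∧
      (∀ s, ∀ x ∈ lb s, x ∈ E) ∧ (∀ s, (lb s).length ≤ 2) ∧ (∀ s, (lb s).prod = b s) := by
  obtain ⟨e, heE, he1⟩ := exists_gen_ne_one E hE
  by_cases hex : ∃ e' ∈ E, e' ≠ 1 ∧ e' ≠ e
  · obtain ⟨e', hE', h1', hne'⟩ := hex
    refine ⟨fun s => cond s e' e, fun s => cond s [e'] [e], ?_, ?_, ?_, ?_, ?_⟩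
    · intro s
      cases s
      · exact he1
      · exact h1'
    · intro s s' h
      cases s <;> cases s'
      · rfl
      · exact absurd h.symm (fun hh => hne' hh)
      · exact absurd h (fun hh => hne' hh)
      · rfl
    · intro s x hx
      cases s <;> simp only [cond, mem_singleton] at hx <;> subst hx
      · exact heE
      · exact hE'
    · intro s; cases s <;> simp
    · intro s; cases s <;> simp
  · push_neg at hex
    have hsub : ∀ x ∈ E, x ∈ Subgroup.zpowers e := by
      intro x hx
      rcases eq_or_ne x 1 with rfl | hx1
      · exact one_mem _
      · rw [hex x hx hx1]
        exact Subgroup.mem_zpowers e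
    have htop : Subgroup.zpowers e = ⊤ := by
      refine top_unique ?_
      rw [← hE]
      exact (Subgroup.closure_le _).mpr fun x hx => hsub x (Finset.mem_coe.mp hx)
    have he2 : e * e ≠ 1 := by
      intro hsq
      apply hcard
      haveI := Fact.mk Nat.prime_two
      have horder : orderOf e = 2 := orderOf_eq_prime (by rw [pow_two]; exact hsq) he1
      rw [← horder, ← Nat.card_zpowers e, htop]
      exact (Subgroup.card_top (G := G)).symm
    have hee : e ≠ e * e := by
      intro h
      have h2 : e * 1 = e * e := by rw [mul_one]; exact h
      exact he1 (mul_left_cancel h2).symm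
    refine ⟨fun s => cond s (e * e) e, fun s => cond s [e, e] [e], ?_, ?_, ?_, ?_, ?_⟩
    · intro s; cases s
      · exact he1
      · exact he2
    · intro s s' h
      cases s <;> cases s'
      · rfl
      · exact absurd h (fun hh => hee hh)
      · exact absurd h.symm (fun hh => hee hh)
      · rfl
    · intro s x hx
      cases s <;> simp only [cond, mem_singleton, mem_cons, mem_nil_iff, or_false] at hx
      · subst hx; exact heE
      · rcases hx with rfl | rfl <;> exact heE
    · intro s; cases s <;> simp
    · intro s; cases s <;> simp

end Choose
end FPAux

theorem many_nonconjugate_short_elements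
    {G₁ G₂ : Type*} [Group G₁] [Group G₂] [Nontrivial G₁] [Nontrivial G₂]
    (hnot : ¬ (Nat.card G₁ = 2 ∧ Nat.card G₂ = 2))
    (E₁ : Finset G₁) (E₂ : Finset G₂)
    (hE₁ : Subgroup.closure (E₁ : Set G₁) = ⊤)
    (hE₂ : Subgroup.closure (E₂ : Set G₂) = ⊤) :
    ∀ r : ℕ, 1 ≤ r → ∃ S : Finset (Coprod G₁ G₂),
      ((2 : ℝ) ^ r / r ≤ S.card) ∧
      (∀ g ∈ S,
        wordLength (Coprod.inl '' (E₁ : Set G₁) ∪ Coprod.inr '' (E₂ : Set G₂)) g ≤ 3 * r) ∧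
      (S : Set (Coprod G₁ G₂)).Pairwise fun g g' => ¬ IsConj g g' := by
  intro r hr
  classical
  by_cases h2 : Nat.card G₂ = 2
  · -- `G₂` has order 2, so `G₁` doesn't: run the construction on the swapped coproduct.
    have h1 : Nat.card G₁ ≠ 2 := fun h => hnot ⟨h, h2⟩
    obtain ⟨a, haE, ha1⟩ := FPAux.exists_gen_ne_one E₂ hE₂
    obtain ⟨b, lb, hb1, hbinj, hlbE, hlbl, hlbp⟩ := FPAux.exists_pair E₁ hE₁ h1
    obtain ⟨S', hcard, hword, hpair⟩ :=
      FPAux.main_asym E₂ E₁ a ha1 haE b hb1 hbinj lb hlbE hlbl hlbp r hr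
    set σ : Coprod G₂ G₁ →* Coprod G₁ G₂ := Coprod.swap G₂ G₁ with hσ
    have hσinj : Function.Injective σ := Coprod.swap_injective
    refine ⟨S'.image σ, ?_, ?_, ?_⟩
    · rw [Finset.card_image_of_injective _ hσinj]
      exact hcard
    · intro g hg
      obtain ⟨u, hu, rfl⟩ := Finset.mem_image.mp hg
      obtain ⟨l, hmem, hlen, hprod⟩ := hword u hu
      have hmem' : ∀ x ∈ l.map σ,
          x ∈ (Coprod.inl '' (E₁ : Set G₁) ∪ Coprod.inr '' (E₂ : Set G₂)) ∨
          x⁻¹ ∈ (Coprod.inl '' (E₁ : Set G₁) ∪ Coprod.inr '' (E₂ : Set G₂)) := by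
        intro x hx
        obtain ⟨y, hy, rfl⟩ := List.mem_map.mp hx
        rcases hmem y hy with hcase | hcase
        · left
          rcases hcase with ⟨z, hz, rfl⟩ | ⟨z, hz, rfl⟩
          · exact Or.inr ⟨z, hz, by simp [hσ]⟩
          · exact Or.inl ⟨z, hz, by simp [hσ]⟩
        · right
          rw [← map_inv]
          rcases hcase with ⟨z, hz, hzeq⟩ | ⟨z, hz, hzeq⟩
          · exact Or.inr ⟨z, hz, by rw [← hzeq]; simp [hσ]⟩
          · exact Or.inl ⟨z, hz, by rw [← hzeq]; simp [hσ]⟩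
      have hle : wordLength
          (Coprod.inl '' (E₁ : Set G₁) ∪ Coprod.inr '' (E₂ : Set G₂)) (σ u) ≤
          (l.map σ).length := by
        refine Nat.sInf_le ?_
        exact ⟨l.map σ, hmem', rfl, by rw [← map_list_prod, hprod]⟩
      refine hle.trans ?_
      rw [List.length_map]
      exact hlen
    · intro x hx y hy hxy hconj
      obtain ⟨u, hu, rfl⟩ := Finset.mem_image.mp (Finset.mem_coe.mp hx)
      obtain ⟨v, hv, rfl⟩ := Finset.mem_image.mp (Finset.mem_coe.mp hy)
      have huv : u ≠ v := fun h => hxy (by rw [h])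
      refine hpair (Finset.mem_coe.mpr hu) (Finset.mem_coe.mpr hv) huv ?_
      have := FPAux.isConj_map (Coprod.swap G₁ G₂) hconj
      rwa [hσ, Coprod.swap_swap, Coprod.swap_swap] at this
  · -- `G₂` does not have order 2: run the construction directly.
    obtain ⟨a, haE, ha1⟩ := FPAux.exists_gen_ne_one E₁ hE₁
    obtain ⟨b, lb, hb1, hbinj, hlbE, hlbl, hlbp⟩ := FPAux.exists_pair E₂ hE₂ h2
    obtain ⟨S, hcard, hword, hpair⟩ :=
      FPAux.main_asym E₁ E₂ a ha1 haE b hb1 hbinj lb hlbE hlbl hlbp r hr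
    refine ⟨S, hcard, ?_, hpair⟩
    intro g hg
    obtain ⟨l, hmem, hlen, hprod⟩ := hword g hg
    refine le_trans (Nat.sInf_le ?_) hlen
    exact ⟨l, hmem, rfl, hprod⟩
end
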